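/- arXiv:0709.2294 — 8 statements merged into one kernel-verified Lean document; each statement's English description precedes it below -/
import Mathlib

section
/- Let (X, d) be a nonempty compact metric space and let (φ₁, …, φₙ) be an iterated function system on X with constants 0 < c₁ ≤ c₂ < 1 (so c₁·d(x,y) ≤ d(φᵢ(x), φᵢ(y)) ≤ c₂·d(x,y) for all i). Let E^∞ = {1, …, n}^ℕ be the space of infinite words over the alphabet {1, …, n} with the product topology, and let σᵢ : E^∞ → E^∞ be given by σᵢ(w₁, w₂, …) = (i, w₁, w₂, …). Define φ̃ᵢ : X × E^∞ → X × E^∞ by φ̃ᵢ(x, w) = (φᵢ(x), σᵢ(w)). Then there is a unique nonempty compact subset X̃ ⊆ X × E^∞ such that ⋃ᵢ₌₁ⁿ φ̃ᵢ(X̃) = X̃, and the sets φ̃₁(X̃), …, φ̃ₙ(X̃) are pairwise disjoint. -/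
open Metric TopologicalSpace Filter

set_option maxHeartbeats 1000000

private def itwAux {n : ℕ} {α : Type*} (f : Fin n → α → α) : ℕ → (ℕ → Fin n) → α → α
  | 0, _, x => x
  | k+1, w, x => f (w 0) (itwAux f k (fun j => w (j+1)) x)

private lemma itwAux_zero {n : ℕ} {α : Type*} (f : Fin n → α → α) (w : ℕ → Fin n) (x : α) :
    itwAux f 0 w x = x := rfl

private lemma itwAux_head {n : ℕ} {α : Type*} (f : Fin n → α → α) (k : ℕ) (w : ℕ → Fin n)
    (x : α) : itwAux f (k+1) w x = f (w 0) (itwAux f k (fun j => w (j+1)) x) := rfl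

private lemma itwAux_succ {n : ℕ} {α : Type*} (f : Fin n → α → α) :
    ∀ (k : ℕ) (w : ℕ → Fin n) (x : α),
      itwAux f (k+1) w x = itwAux f k w (f (w k) x) := by
  intro k
  induction k with
  | zero => intro w x; rfl
  | succ k ih =>
      intro w x
      rw [itwAux_head f (k+1) w x, ih (fun j => w (j+1)) x]
      exact (itwAux_head f k w _).symm

private lemma itwAux_add {n : ℕ} {α : Type*} (f : Fin n → α → α) (k : ℕ) :
    ∀ (j : ℕ) (w : ℕ → Fin n) (x : α),
      itwAux f (k+j) w x = itwAux f k w (itwAux f j (fun t => w (k+t)) x) := by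
  intro j
  induction j with
  | zero => intro w x; rfl
  | succ j ih =>
      intro w x
      have h1 : k + (j+1) = (k+j) + 1 := rfl
      rw [h1, itwAux_succ f (k+j) w x, ih w (f (w (k+j)) x), itwAux_succ]

private lemma itwAux_mem {n : ℕ} {α : Type*} (f : Fin n → α → α) {S : Set α}
    (hS : ∀ i, ∀ p ∈ S, f i p ∈ S) :
    ∀ (k : ℕ) (w : ℕ → Fin n) {p : α}, p ∈ S → itwAux f k w p ∈ S := by
  intro k
  induction k with
  | zero => intro w p hp; exact hp
  | succ k ih =>
      intro w p hp
      rw [itwAux_head]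
      exact hS _ _ (ih _ hp)

private lemma itwAux_dist {n : ℕ} {X : Type*} [MetricSpace X] (φ : Fin n → X → X)
    {c : ℝ} (hc : 0 ≤ c) (hφ : ∀ i x y, dist (φ i x) (φ i y) ≤ c * dist x y) :
    ∀ (k : ℕ) (w v : ℕ → Fin n) (a b : X), (∀ j < k, w j = v j) →
      dist (itwAux φ k w a) (itwAux φ k v b) ≤ c ^ k * dist a b := by
  intro k
  induction k with
  | zero => intro w v a b _; simp [itwAux_zero]
  | succ k ih =>
      intro w v a b h
      have h0 : w 0 = v 0 := h 0 (Nat.succ_pos k)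
      rw [itwAux_head, itwAux_head, h0]
      calc dist (φ (v 0) (itwAux φ k (fun j => w (j+1)) a))
            (φ (v 0) (itwAux φ k (fun j => v (j+1)) b))
          ≤ c * dist (itwAux φ k (fun j => w (j+1)) a) (itwAux φ k (fun j => v (j+1)) b) :=
            hφ _ _ _
        _ ≤ c * (c ^ k * dist a b) := by
            exact mul_le_mul_of_nonneg_left
              (ih _ _ _ _ (fun j hj => h (j+1) (by omega))) hc
        _ = c ^ (k+1) * dist a b := by ring

/-- The lifted system of an iterated function system: on `X × E^∞`, with
`φ̃ᵢ(x, w) = (φᵢ x, i·w)`, there is a unique nonempty compact invariant set `X̃` with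
`⋃ᵢ φ̃ᵢ(X̃) = X̃`, and the images `φ̃ᵢ(X̃)` are pairwise disjoint. -/
theorem stmt2 {X : Type*} [MetricSpace X] [CompactSpace X] [Nonempty X]
    (n : ℕ) (hn : 1 ≤ n) (φ : Fin n → X → X) (c₁ c₂ : ℝ)
    (hc₁ : 0 < c₁) (hc₁₂ : c₁ ≤ c₂) (hc₂ : c₂ < 1)
    (hφ : ∀ i x y, c₁ * dist x y ≤ dist (φ i x) (φ i y) ∧
        dist (φ i x) (φ i y) ≤ c₂ * dist x y)
    (σ : Fin n → (ℕ → Fin n) → (ℕ → Fin n))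
    (hσ : ∀ i w, σ i w 0 = i ∧ ∀ k, σ i w (k + 1) = w k)
    (φt : Fin n → X × (ℕ → Fin n) → X × (ℕ → Fin n))
    (hφt : ∀ i p, φt i p = (φ i p.1, σ i p.2)) :
    ∃ Xt : NonemptyCompacts (X × (ℕ → Fin n)),
      ((⋃ i, φt i '' (Xt : Set (X × (ℕ → Fin n)))) = (Xt : Set (X × (ℕ → Fin n)))) ∧
      (∀ Y : NonemptyCompacts (X × (ℕ → Fin n)),
        (⋃ i, φt i '' (Y : Set (X × (ℕ → Fin n)))) = (Y : Set (X × (ℕ → Fin n))) → Y = Xt) ∧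
      Pairwise fun i j =>
        Disjoint (φt i '' (Xt : Set (X × (ℕ → Fin n)))) (φt j '' (Xt : Set (X × (ℕ → Fin n)))) := by
  classical
  have hc₂0 : 0 ≤ c₂ := le_trans hc₁.le hc₁₂
  have hupper : ∀ i x y, dist (φ i x) (φ i y) ≤ c₂ * dist x y := fun i x y => (hφ i x y).2
  obtain ⟨x₀⟩ := ‹Nonempty X›
  set D := Metric.diam (Set.univ : Set X) with hD
  have hbd : ∀ a b : X, dist a b ≤ D := fun a b =>
    Metric.dist_le_diam_of_mem isCompact_univ.isBounded (Set.mem_univ _) (Set.mem_univ _)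
  have hD0 : 0 ≤ D := Metric.diam_nonneg
  have hIdist := itwAux_dist φ hc₂0 hupper
  -- the coding map π
  have hcauchy : ∀ w : ℕ → Fin n, CauchySeq (fun k => itwAux φ k w x₀) := by
    intro w
    apply cauchySeq_of_le_geometric c₂ D hc₂
    intro k
    rw [itwAux_succ]
    calc dist (itwAux φ k w x₀) (itwAux φ k w (φ (w k) x₀))
        ≤ c₂ ^ k * dist x₀ (φ (w k) x₀) := hIdist k w w _ _ (fun _ _ => rfl)
      _ ≤ c₂ ^ k * D := mul_le_mul_of_nonneg_left (hbd _ _) (pow_nonneg hc₂0 k)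
      _ = D * c₂ ^ k := mul_comm _ _
  have hlim : ∀ w : ℕ → Fin n, ∃ x, Tendsto (fun k => itwAux φ k w x₀) atTop (nhds x) :=
    fun w => cauchySeq_tendsto_of_complete (hcauchy w)
  choose π hπ using hlim
  -- distance from π w to any k-fold iterate along w
  have hπk : ∀ (w : ℕ → Fin n) (k : ℕ) (a : X), dist (π w) (itwAux φ k w a) ≤ c₂ ^ k * D := by
    intro w k a
    have ht : Tendsto (fun j => itwAux φ (k + j) w x₀) atTop (nhds (π w)) := by
      have h2 : Tendsto (fun j : ℕ => k + j) atTop atTop :=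
        tendsto_atTop_mono (fun j => Nat.le_add_left j k) tendsto_id
      exact (hπ w).comp h2
    have hdt : Tendsto (fun j => dist (itwAux φ (k + j) w x₀) (itwAux φ k w a)) atTop
        (nhds (dist (π w) (itwAux φ k w a))) := ht.dist tendsto_const_nhds
    refine le_of_tendsto hdt (Eventually.of_forall fun j => ?_)
    rw [itwAux_add]
    calc dist (itwAux φ k w (itwAux φ j (fun t => w (k+t)) x₀)) (itwAux φ k w a)
        ≤ c₂ ^ k * dist (itwAux φ j (fun t => w (k+t)) x₀) a := hIdist k w w _ _ (fun _ _ => rfl)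
      _ ≤ c₂ ^ k * D := mul_le_mul_of_nonneg_left (hbd _ _) (pow_nonneg hc₂0 k)
  have hgeo : Tendsto (fun k => c₂ ^ k * D) atTop (nhds 0) := by
    have := (tendsto_pow_atTop_nhds_zero_of_lt_one hc₂0 hc₂).mul_const D
    simpa using this
  have hcontφ : ∀ i, Continuous (φ i) := by
    intro i
    exact (LipschitzWith.of_dist_le_mul (K := ⟨c₂, hc₂0⟩) (fun x y => hupper i x y)).continuous
  -- π (σ i w) = φ i (π w)
  have hshift : ∀ (i : Fin n) (w : ℕ → Fin n), (fun j => σ i w (j+1)) = w :=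
    fun i w => funext fun j => (hσ i w).2 j
  have hπσ : ∀ (i : Fin n) (w : ℕ → Fin n), π (σ i w) = φ i (π w) := by
    intro i w
    have h1 : ∀ k, itwAux φ (k+1) (σ i w) x₀ = φ i (itwAux φ k w x₀) := by
      intro k
      rw [itwAux_head, hshift i w, (hσ i w).1]
    have ht1 : Tendsto (fun k => itwAux φ (k+1) (σ i w) x₀) atTop (nhds (π (σ i w))) := by
      have h2 : Tendsto (fun k : ℕ => k + 1) atTop atTop :=
        tendsto_atTop_mono (fun k => Nat.le_succ k) tendsto_id
      exact (hπ (σ i w)).comp h2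
    have ht2 : Tendsto (fun k => φ i (itwAux φ k w x₀)) atTop (nhds (φ i (π w))) :=
      ((hcontφ i).tendsto (π w)).comp (hπ w)
    exact tendsto_nhds_unique (ht1.congr fun k => h1 k) ht2
  -- π is continuous
  have hπcont : Continuous π := by
    rw [continuous_iff_continuousAt]
    intro w
    rw [ContinuousAt, Metric.tendsto_nhds]
    intro ε hε
    obtain ⟨k, hk⟩ : ∃ k, c₂ ^ k * D < ε / 3 :=
      (hgeo.eventually (gt_mem_nhds (by positivity))).exists
    have hUopen : IsOpen {v : ℕ → Fin n | ∀ j < k, v j = w j} := by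
      have he : {v : ℕ → Fin n | ∀ j < k, v j = w j}
          = ⋂ j ∈ Finset.range k, (fun v : ℕ → Fin n => v j) ⁻¹' {w j} := by
        ext v; simp [Finset.mem_range]
      rw [he]
      exact isOpen_biInter_finset fun j _ =>
        (continuous_apply j).isOpen_preimage _ (isOpen_discrete _)
    filter_upwards [hUopen.mem_nhds (fun j _ => rfl)] with v hv
    have h1 : dist (π v) (itwAux φ k v x₀) ≤ c₂ ^ k * D := hπk v k x₀
    have h2 : dist (itwAux φ k v x₀) (itwAux φ k w x₀) ≤ c₂ ^ k * D := by
      calc dist (itwAux φ k v x₀) (itwAux φ k w x₀) ≤ c₂ ^ k * dist x₀ x₀ :=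
            hIdist k v w _ _ (fun j hj => hv j hj)
        _ ≤ c₂ ^ k * D := by
            exact mul_le_mul_of_nonneg_left (by simpa using hbd x₀ x₀) (pow_nonneg hc₂0 k)
    have h3 : dist (itwAux φ k w x₀) (π w) ≤ c₂ ^ k * D := by
      rw [dist_comm]; exact hπk w k x₀
    calc dist (π v) (π w)
        ≤ dist (π v) (itwAux φ k v x₀) + dist (itwAux φ k v x₀) (itwAux φ k w x₀)
          + dist (itwAux φ k w x₀) (π w) := dist_triangle4 _ _ _ _
      _ < ε := by linarith
  -- the invariant set
  haveI : Nonempty (Fin n) := ⟨⟨0, hn⟩⟩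
  set S : Set (X × (ℕ → Fin n)) := Set.range (fun w => (π w, w)) with hSdef
  have hScompact : IsCompact S := isCompact_range (hπcont.prodMk continuous_id)
  have hSne : S.Nonempty := Set.range_nonempty _
  have hmemS : ∀ w : ℕ → Fin n, (π w, w) ∈ S := fun w => ⟨w, rfl⟩
  have hσfull : ∀ w : ℕ → Fin n, σ (w 0) (fun j => w (j+1)) = w := by
    intro w
    funext j
    cases j with
    | zero => exact (hσ _ _).1
    | succ j => exact (hσ _ _).2 j
  have hSinv : (⋃ i, φt i '' S) = S := by
    apply Set.Subset.antisymm
    · rintro p hp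
      simp only [Set.mem_iUnion, Set.mem_image] at hp
      obtain ⟨i, q, ⟨w, rfl⟩, rfl⟩ := hp
      rw [hφt]
      show (φ i (π w), σ i w) ∈ S
      rw [← hπσ]
      exact hmemS (σ i w)
    · rintro p ⟨w, rfl⟩
      refine Set.mem_iUnion.2 ⟨w 0, (π (fun j => w (j+1)), fun j => w (j+1)),
        hmemS _, ?_⟩
      rw [hφt]
      show (φ (w 0) (π fun j => w (j+1)), σ (w 0) fun j => w (j+1)) = (π w, w)
      rw [← hπσ, hσfull w]
  refine ⟨⟨⟨S, hScompact⟩, hSne⟩, hSinv, ?_, ?_⟩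
  · -- uniqueness
    intro Y hYinv
    apply SetLike.coe_injective
    show (Y : Set (X × (ℕ → Fin n))) = S
    set T := (Y : Set (X × (ℕ → Fin n))) with hTdef
    have hTclosed : IsClosed T := Y.isCompact.isClosed
    have hstepT : ∀ i, ∀ p ∈ T, φt i p ∈ T := by
      intro i p hp
      rw [← hYinv]
      exact Set.mem_iUnion.2 ⟨i, Set.mem_image_of_mem _ hp⟩
    apply Set.Subset.antisymm
    · -- T ⊆ S
      intro y hy
      have hpre : ∀ p : {p // p ∈ T}, ∃ iq : Fin n × {p // p ∈ T},
          φt iq.1 iq.2.1 = p.1 := by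
        rintro ⟨p, hp⟩
        rw [← hYinv] at hp
        simp only [Set.mem_iUnion, Set.mem_image] at hp
        obtain ⟨i, q, hq, h⟩ := hp
        exact ⟨⟨i, ⟨q, hq⟩⟩, h⟩
      choose g hg using hpre
      set G : {p // p ∈ T} → {p // p ∈ T} := fun p => (g p).2 with hG
      set ys : ℕ → {p // p ∈ T} := fun k => G^[k] ⟨y, hy⟩ with hysdef
      set w : ℕ → Fin n := fun k => (g (ys k)).1 with hwdef
      have hstep : ∀ k, ys (k+1) = G (ys k) := by
        intro k
        simp only [hysdef]
        exact Function.iterate_succ_apply' G k _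
      have hkey : ∀ k, φt (w k) ((ys (k+1)).1) = (ys k).1 := by
        intro k
        rw [hstep k]
        exact hg (ys k)
      have hsnd : ∀ k, ((ys k).1).2 = σ (w k) (((ys (k+1)).1).2) := by
        intro k
        conv_lhs => rw [← hkey k]
        rw [hφt]
      have hfst' : ∀ k, ((ys k).1).1 = φ (w k) (((ys (k+1)).1).1) := by
        intro k
        conv_lhs => rw [← hkey k]
        rw [hφt]
      have h2 : ∀ (j k : ℕ), ((ys k).1).2 j = w (k + j) := by
        intro j
        induction j with
        | zero =>
            intro k
            rw [hsnd k, (hσ _ _).1, Nat.add_zero]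
        | succ j ih =>
            intro k
            rw [hsnd k, (hσ _ _).2 j, ih (k+1)]
            exact congrArg w (by omega)
      have h1 : ∀ (k m : ℕ), ((ys m).1).1 = itwAux φ k (fun t => w (m + t)) (((ys (m + k)).1).1) := by
        intro k
        induction k with
        | zero =>
            intro m
            rw [itwAux_zero, Nat.add_zero]
        | succ k ih =>
            intro m
            rw [hfst' m, ih (m+1), itwAux_head]
            have e1 : (fun t => w (m+1+t)) = (fun j => w (m+(j+1))) :=
              funext fun t => congrArg w (by omega)
            have e2 : m+1+k = m+(k+1) := by omega
            have e3 : w m = w (m + 0) := congrArg w (by omega)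
            rw [e1, e2, ← e3]
      have hyw : y.2 = w := by
        funext j
        have := h2 j 0
        have hy0 : (ys 0).1 = y := rfl
        rw [hy0, Nat.zero_add] at this
        exact this
      have hy1 : y.1 = π w := by
        have hb : ∀ k, dist (y.1) (π w) ≤ c₂ ^ k * D := by
          intro k
          have h0 : (fun t => w (0 + t)) = w := funext fun t => congrArg w (by omega)
          have := h1 k 0
          rw [h0, Nat.zero_add] at this
          have hyy : y.1 = itwAux φ k w (((ys k).1).1) := this
          rw [hyy, dist_comm]
          exact hπk w k _
        have hdle : dist (y.1) (π w) ≤ 0 := ge_of_tendsto hgeo (Eventually.of_forall hb)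
        have := le_antisymm hdle dist_nonneg
        exact dist_eq_zero.1 this
      refine ⟨w, ?_⟩
      show (π w, w) = y
      rw [← hy1, ← hyw]
    · -- S ⊆ T
      rintro p ⟨w, rfl⟩
      show (π w, w) ∈ T
      obtain ⟨y₀, hy₀⟩ := Y.nonempty
      have hmem : ∀ k, itwAux φt k w y₀ ∈ T := fun k => itwAux_mem φt hstepT k w hy₀
      have hfstw : ∀ (k : ℕ) (u : ℕ → Fin n) (p : X × (ℕ → Fin n)),
          (itwAux φt k u p).1 = itwAux φ k u p.1 := by
        intro k
        induction k with
        | zero => intro u p; rfl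
        | succ k ih =>
            intro u p
            rw [itwAux_head, itwAux_head, hφt]
            exact congrArg (φ (u 0)) (ih _ _)
      have hsndw : ∀ (k : ℕ) (u : ℕ → Fin n) (p : X × (ℕ → Fin n)) (j : ℕ), j < k →
          (itwAux φt k u p).2 j = u j := by
        intro k
        induction k with
        | zero => intro u p j hj; omega
        | succ k ih =>
            intro u p j hj
            rw [itwAux_head, hφt]
            cases j with
            | zero => exact (hσ _ _).1
            | succ j =>
                show σ (u 0) ((itwAux φt k (fun t => u (t + 1)) p).2) (j+1) = u (j+1)
                rw [(hσ _ _).2 j]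
                exact ih _ _ j (by omega)
      have ht : Tendsto (fun k => itwAux φt k w y₀) atTop (nhds (π w, w)) := by
        rw [nhds_prod_eq]
        apply Tendsto.prodMk
        · have hcongr : (fun k => (itwAux φt k w y₀).1) = fun k => itwAux φ k w y₀.1 :=
            funext fun k => hfstw k w y₀
          rw [show (fun k => (itwAux φt k w y₀).1) = fun k => itwAux φ k w y₀.1 from hcongr]
          rw [tendsto_iff_dist_tendsto_zero]
          apply squeeze_zero (fun k => dist_nonneg) (fun k => ?_) hgeo
          rw [dist_comm]
          exact hπk w k _
        · rw [tendsto_pi_nhds]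
          intro j
          apply Tendsto.congr' (f₁ := fun _ => w j)
          · filter_upwards [eventually_ge_atTop (j+1)] with k hk
            exact (hsndw k w y₀ j (by omega)).symm
          · exact tendsto_const_nhds
      exact hTclosed.mem_of_tendsto ht (Eventually.of_forall hmem)
  · -- disjointness
    intro i j hij
    rw [Set.disjoint_left]
    rintro p ⟨q, _, rfl⟩ ⟨r, _, hr⟩
    apply hij
    have h1 : (φt i q).2 0 = i := by rw [hφt]; exact (hσ _ _).1
    have h2 : (φt j r).2 0 = j := by rw [hφt]; exact (hσ _ _).1
    rw [hr] at h2
    rw [h1] at h2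
    exact h2
end

section
/- Let X be a compact Hausdorff topological space and let T : X → X be a surjective local homeomorphism. Then there exist a natural number N and continuous functions ψ₁, …, ψ_N : X → ℂ such that for all x, y ∈ X with T(x) = T(y): ∑ᵢ₌₁^N ψᵢ(x)·conj(ψᵢ(y)) equals card(T⁻¹(T(x))) when x = y, and equals 0 when x ≠ y. (Such a family {ψᵢ} is a normalized tight frame, or quasi-basis, for the Deaconu C*-correspondence of (X, T): every continuous ξ : X → ℂ satisfies ξ(x) = ∑ᵢ ψᵢ(x)·(1/card(T⁻¹(Tx)))·∑_{T(y)=T(x)} conj(ψᵢ(y)) ξ(y).) -/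
open ComplexConjugate

open Set

section Aux

variable {X : Type*} [TopologicalSpace X]

lemma loc_chart {T : X → X} (hT : IsLocalHomeomorph T) (x : X) :
    ∃ U : Set X, IsOpen U ∧ x ∈ U ∧ Set.InjOn T U := by
  obtain ⟨e, hx, he⟩ := hT x
  exact ⟨e.source, e.open_source, hx, he ▸ e.injOn⟩

lemma fiber_finite [CompactSpace X] [T2Space X] {T : X → X} (hT : IsLocalHomeomorph T)
    (z : X) : (T ⁻¹' {z}).Finite := by
  choose U hUo hUm hUinj using loc_chart hT
  have hclosed : IsClosed (T ⁻¹' {z}) := isClosed_singleton.preimage hT.continuous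
  obtain ⟨t, ht⟩ := hclosed.isCompact.elim_finite_subcover U hUo
    (fun x _ => mem_iUnion.2 ⟨x, hUm x⟩)
  have : (T ⁻¹' {z}) ⊆ ⋃ x ∈ t, (T ⁻¹' {z} ∩ U x) := by
    intro y hy
    obtain ⟨x, hxt, hyU⟩ := mem_iUnion₂.1 (ht hy)
    exact mem_iUnion₂.2 ⟨x, hxt, hy, hyU⟩
  refine Set.Finite.subset (Set.Finite.biUnion t.finite_toSet fun x _ => ?_) this
  refine Set.Subsingleton.finite fun a ha b hb => ?_
  exact hUinj x ha.2 hb.2 (ha.1.trans hb.1.symm)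

lemma card_locally_const [CompactSpace X] [T2Space X] {T : X → X}
    (hT : IsLocalHomeomorph T) (hfin : ∀ z, (T ⁻¹' {z}).Finite) (z : X) :
    ∃ V : Set X, IsOpen V ∧ z ∈ V ∧
      ∀ z' ∈ V, Nat.card (T ⁻¹' {z'}) = Nat.card (T ⁻¹' {z}) := by
  choose U hUo hUm hUinj using loc_chart hT
  obtain ⟨W, hW, hWdisj⟩ := (hfin z).t2_separation
  set F := (hfin z).toFinset with hF
  set U' : X → Set X := fun x => U x ∩ W x with hU'
  have hU'o : ∀ x, IsOpen (U' x) := fun x => (hUo x).inter (hW x).2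
  have hU'm : ∀ x, x ∈ U' x := fun x => ⟨hUm x, (hW x).1⟩
  set K : Set X := univ \ ⋃ x ∈ F, U' x with hK
  have hKclosed : IsClosed K :=
    isClosed_univ.sdiff (isOpen_biUnion fun x _ => hU'o x)
  have hTKclosed : IsClosed (T '' K) :=
    (hKclosed.isCompact.image hT.continuous).isClosed
  set V : Set X := (⋂ x ∈ F, T '' (U' x)) \ T '' K with hV
  have hVopen : IsOpen V := by
    refine IsOpen.sdiff ?_ hTKclosed
    exact isOpen_biInter_finset fun x _ => hT.isOpenMap _ (hU'o x)
  have fiber_sub : ∀ z', z' ∉ T '' K → T ⁻¹' {z'} ⊆ ⋃ x ∈ F, U' x := by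
    intro z' hz' y hy
    by_contra hyn
    exact hz' ⟨y, ⟨trivial, hyn⟩, hy⟩
  have hzV : z ∈ V := by
    refine ⟨mem_iInter₂.2 fun x hx => ?_, ?_⟩
    · have hxz : T x = z := by simpa [hF] using hx
      exact ⟨x, hU'm x, hxz⟩
    · rintro ⟨k, hk, hkz⟩
      have hkF : k ∈ F := by simp [hF, hkz]
      exact hk.2 (mem_iUnion₂.2 ⟨k, hkF, hU'm k⟩)
  refine ⟨V, hVopen, hzV, ?_⟩
  have key : ∀ z' ∈ V, Nat.card (T ⁻¹' {z'}) = F.card := by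
    intro z' hz'
    have hsub : T ⁻¹' {z'} ⊆ ⋃ x ∈ F, U' x := fiber_sub z' hz'.2
    have hex : ∀ x ∈ F, ∃ y, y ∈ U' x ∧ T y = z' := by
      intro x hx
      obtain ⟨y, hy, hyz⟩ := mem_iInter₂.1 hz'.1 x hx
      exact ⟨y, hy, hyz⟩
    choose g hg1 hg2 using hex
    have hginj : ∀ x₁ (h₁ : x₁ ∈ F) x₂ (h₂ : x₂ ∈ F),
        g x₁ h₁ = g x₂ h₂ → x₁ = x₂ := by
      intro x₁ h₁ x₂ h₂ heq
      by_contra hne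
      have hd := hWdisj (by simpa [hF] using h₁) (by simpa [hF] using h₂) hne
      exact (Set.disjoint_left.1 hd) (hg1 x₁ h₁).2 (heq ▸ (hg1 x₂ h₂).2)
    have hgsurj : ∀ y ∈ T ⁻¹' {z'}, ∃ x, ∃ h : x ∈ F, g x h = y := by
      intro y hy
      obtain ⟨x, hx, hyU⟩ := mem_iUnion₂.1 (hsub hy)
      refine ⟨x, hx, ?_⟩
      exact hUinj x (hg1 x hx).1 hyU.1 ((hg2 x hx).trans hy.symm)
    have : Nat.card (T ⁻¹' {z'}) = Nat.card F := by
      refine (Nat.card_eq_of_bijective (fun p : F => (⟨g p.1 p.2, by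
        simpa using hg2 p.1 p.2⟩ : T ⁻¹' {z'})) ⟨?_, ?_⟩).symm
      · rintro ⟨x₁, h₁⟩ ⟨x₂, h₂⟩ h
        exact Subtype.ext (hginj x₁ h₁ x₂ h₂ (by simpa using h))
      · rintro ⟨y, hy⟩
        obtain ⟨x, hx, hgx⟩ := hgsurj y hy
        exact ⟨⟨x, hx⟩, Subtype.ext hgx⟩
    simpa [Nat.card_eq_finsetCard] using this
  intro z' hz'
  rw [key z' hz', key z hzV]

lemma card_comp_cont [CompactSpace X] [T2Space X] {T : X → X}
    (hT : IsLocalHomeomorph T) :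
    Continuous fun x => ((Nat.card (T ⁻¹' {T x}) : ℝ)) := by
  have hlc : IsLocallyConstant fun x => Nat.card (T ⁻¹' {T x}) := by
    rw [IsLocallyConstant.iff_exists_open]
    intro x
    obtain ⟨V, hVo, hVm, hVc⟩ := card_locally_const hT (fiber_finite hT) (T x)
    exact ⟨T ⁻¹' V, hVo.preimage hT.continuous, hVm, fun y hy => hVc (T y) hy⟩
  exact (hlc.comp fun n : ℕ => (n : ℝ)).continuous

end Aux


/-- For a surjective local homeomorphism `T` of a compact Hausdorff space `X`, there
exist finitely many continuous functions `ψ₁, …, ψ_N : X → ℂ` such that for all `x, y`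
with `T x = T y`, `∑ᵢ ψᵢ(x) conj (ψᵢ(y))` equals `card (T⁻¹(T x))` if `x = y` and `0`
if `x ≠ y`; such a family is a normalized tight frame (quasi-basis) for the Deaconu
correspondence: every continuous `ξ : X → ℂ` is reconstructed by
`ξ(x) = ∑ᵢ ψᵢ(x) (1/card (T⁻¹(Tx))) ∑_{T y = T x} conj (ψᵢ(y)) ξ(y)`. -/
theorem stmt4 {X : Type*} [TopologicalSpace X] [CompactSpace X] [T2Space X]
    (T : X → X) (hT : IsLocalHomeomorph T) (hsurj : Function.Surjective T) :
    ∃ (N : ℕ) (ψ : Fin N → C(X, ℂ)),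
      (∀ x y : X, T x = T y →
        (x = y → ∑ i, ψ i x * conj (ψ i y) = (Nat.card (T ⁻¹' {T x}) : ℂ)) ∧
        (x ≠ y → ∑ i, ψ i x * conj (ψ i y) = 0)) ∧
      (∀ ξ : C(X, ℂ), ∀ x : X,
        ξ x = ∑ i, ψ i x * ((Nat.card (T ⁻¹' {T x}) : ℂ))⁻¹ *
          ∑ᶠ y ∈ {y : X | T y = T x}, conj (ψ i y) * ξ y) := by
  classical
  choose U hUo hUm hUinj using loc_chart hT
  -- finite subcover
  obtain ⟨s, hs⟩ := isCompact_univ.elim_finite_subcover U hUo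
    (fun x _ => mem_iUnion.2 ⟨x, hUm x⟩)
  set N := s.card with hN
  set idx : Fin N → X := fun i => s.equivFin.symm i with hidx
  set U' : Fin N → Set X := fun i => U (idx i) with hU'
  have hcover : (univ : Set X) ⊆ ⋃ i, U' i := by
    intro x _
    obtain ⟨a, hat, hxa⟩ := mem_iUnion₂.1 (hs (mem_univ x))
    exact mem_iUnion.2 ⟨s.equivFin ⟨a, hat⟩, by simpa [hU', hidx] using hxa⟩
  obtain ⟨f, hf⟩ := PartitionOfUnity.exists_isSubordinate isClosed_univ U'
    (fun i => hUo _) hcover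
  -- the fiber-count function
  set c : X → ℝ := fun x => (Nat.card (T ⁻¹' {T x}) : ℝ) with hc
  have hccont : Continuous c := card_comp_cont hT
  have hcnonneg : ∀ x, 0 ≤ c x := fun x => Nat.cast_nonneg _
  have hfin : ∀ z, (T ⁻¹' {z}).Finite := fiber_finite hT
  have hcpos : ∀ x, 0 < c x := by
    intro x
    have : Nonempty (T ⁻¹' {T x}) := ⟨⟨x, rfl⟩⟩
    have := (hfin (T x)).to_subtype
    simpa [hc] using (Nat.cast_pos (α := ℝ)).2 (Nat.card_pos (α := (T ⁻¹' {T x})))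
  -- the frame functions
  set ψ : Fin N → C(X, ℂ) := fun i =>
    ⟨fun x => ((Real.sqrt (c x * f i x) : ℝ) : ℂ), by
      exact Complex.continuous_ofReal.comp
        ((hccont.mul (f i).continuous).sqrt)⟩ with hψ
  have hψval : ∀ i x, ψ i x = ((Real.sqrt (c x * f i x) : ℝ) : ℂ) := fun i x => rfl
  have hsum1 : ∀ x : X, ∑ i, f i x = 1 := by
    intro x
    have := f.sum_eq_one (mem_univ x)
    rwa [finsum_eq_sum_of_fintype] at this
  -- frame identity
  have hframe : ∀ x y : X, T x = T y →
      (x = y → ∑ i, ψ i x * conj (ψ i y) = (Nat.card (T ⁻¹' {T x}) : ℂ)) ∧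
      (x ≠ y → ∑ i, ψ i x * conj (ψ i y) = 0) := by
    intro x y hTxy
    constructor
    · rintro rfl
      have : ∀ i, ψ i x * conj (ψ i x) = ((c x * f i x : ℝ) : ℂ) := by
        intro i
        rw [hψval, Complex.conj_ofReal, ← Complex.ofReal_mul,
          Real.mul_self_sqrt (mul_nonneg (hcnonneg x) (f.nonneg i x))]
      rw [Finset.sum_congr rfl fun i _ => this i, ← Complex.ofReal_sum,
        ← Finset.mul_sum, hsum1, mul_one]
      norm_cast
    · intro hne
      refine Finset.sum_eq_zero fun i _ => ?_
      rcases eq_or_ne (f i x) 0 with h0 | h0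
      · rw [hψval, h0, mul_zero, Real.sqrt_zero, Complex.ofReal_zero, zero_mul]
      · have hy0 : f i y = 0 := by
          by_contra hy0
          have hxU : x ∈ U' i := hf i (subset_tsupport _ h0)
          have hyU : y ∈ U' i := hf i (subset_tsupport _ hy0)
          exact hne (hUinj (idx i) hxU hyU hTxy)
        rw [hψval i y, hy0, mul_zero, Real.sqrt_zero, Complex.ofReal_zero,
          map_zero, mul_zero]
  refine ⟨N, ψ, hframe, ?_⟩
  -- reconstruction
  intro ξ x
  have hxfib : x ∈ T ⁻¹' {T x} := rfl
  set F := (hfin (T x)).toFinset with hF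
  have hxF : x ∈ F := by simp [hF]
  have hfs : ∀ i, (∑ᶠ y ∈ {y : X | T y = T x}, conj (ψ i y) * ξ y)
      = ∑ y ∈ F, conj (ψ i y) * ξ y := by
    intro i
    have : {y : X | T y = T x} = T ⁻¹' {T x} := rfl
    rw [this, finsum_mem_eq_finite_toFinset_sum _ (hfin (T x))]
  have hc0 : (Nat.card (T ⁻¹' {T x}) : ℂ) ≠ 0 := by
    have : Nonempty (T ⁻¹' {T x}) := ⟨⟨x, rfl⟩⟩
    have := (hfin (T x)).to_subtype
    exact Nat.cast_ne_zero.2 (Nat.card_pos (α := (T ⁻¹' {T x}))).ne'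
  calc ξ x = (Nat.card (T ⁻¹' {T x}) : ℂ)⁻¹ *
        ∑ y ∈ F, (∑ i, ψ i x * conj (ψ i y)) * ξ y := by
        rw [Finset.sum_eq_single x]
        · rw [((hframe x x rfl).1 rfl)]
          field_simp
        · intro y hyF hne
          have hTy : T y = T x := by simpa [hF] using hyF
          rw [(hframe x y hTy.symm).2 (Ne.symm hne), zero_mul]
        · intro hx; exact absurd hxF hx
    _ = ∑ i, ψ i x * ((Nat.card (T ⁻¹' {T x}) : ℂ))⁻¹ *
          ∑ᶠ y ∈ {y : X | T y = T x}, conj (ψ i y) * ξ y := by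
        simp_rw [hfs, Finset.sum_mul, Finset.mul_sum]
        rw [Finset.sum_comm]
        refine Finset.sum_congr rfl fun i _ => Finset.sum_congr rfl fun y _ => ?_
        ring
end

section
/- Let 𝕋 = {z ∈ ℂ : |z| = 1}, let m₁ : 𝕋 → ℂ be continuous with |m₁(z)|² + |m₁(−z)|² = 2 for all z, and set m₂(z) = z·conj(m₁(−z)). Suppose m₂' : 𝕋 → ℂ is continuous, satisfies |m₂'(z)|² + |m₂'(−z)|² = 2 for all z, and conj(m₁(z))·m₂'(z) + conj(m₁(−z))·m₂'(−z) = 0 for all z (i.e., {m₁, m₂'} is also a filter bank). Then there exists a continuous function θ : 𝕋 → ℂ with |θ(u)| = 1 for all u ∈ 𝕋 such that m₂'(z) = θ(z²)·m₂(z) for all z ∈ 𝕋. -/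
open ComplexConjugate

/-- Any high pass filter `m₂'` completing a continuous low pass filter `m₁` is obtained
from the canonical choice `m₂(z) = z conj (m₁(−z))` by multiplication by `θ(z²)`, where
`θ` is a continuous unimodular function on the circle. -/
theorem stmt6 (m₁ m₂ m₂' : ℂ → ℂ)
    (hm₁c : ContinuousOn m₁ (Metric.sphere (0 : ℂ) 1))
    (h₁ : ∀ z : ℂ, ‖z‖ = 1 →
      ‖m₁ z‖ ^ 2 + ‖m₁ (-z)‖ ^ 2 = 2)
    (h₂ : ∀ z : ℂ, m₂ z = z * conj (m₁ (-z)))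
    (hm₂'c : ContinuousOn m₂' (Metric.sphere (0 : ℂ) 1))
    (h₂' : ∀ z : ℂ, ‖z‖ = 1 →
      ‖m₂' z‖ ^ 2 + ‖m₂' (-z)‖ ^ 2 = 2)
    (horth : ∀ z : ℂ, ‖z‖ = 1 →
      conj (m₁ z) * m₂' z + conj (m₁ (-z)) * m₂' (-z) = 0) :
    ∃ θ : ℂ → ℂ, ContinuousOn θ (Metric.sphere (0 : ℂ) 1) ∧
      (∀ u : ℂ, ‖u‖ = 1 → ‖θ u‖ = 1) ∧
      (∀ z : ℂ, ‖z‖ = 1 → m₂' z = θ (z ^ 2) * m₂ z) := by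
  set lam : ℂ → ℂ := fun z => conj z * (m₁ (-z) * m₂' z - m₁ z * m₂' (-z)) / 2 with hlamdef
  have lam_even : ∀ z : ℂ, lam (-z) = lam z := by
    intro z
    simp only [hlamdef, neg_neg, map_neg]
    ring
  have conj_self : ∀ w : ℂ, conj w * w = ((‖w‖ ^ 2 : ℝ) : ℂ) := by
    intro w
    rw [mul_comm, Complex.mul_conj, Complex.normSq_eq_norm_sq]
  -- the key pointwise identities
  have key : ∀ z : ℂ, ‖z‖ = 1 → m₂' z = lam z * m₂ z := by
    intro z hz
    have e1 : conj (m₁ z) * m₁ z + conj (m₁ (-z)) * m₁ (-z) = 2 := by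
      rw [conj_self, conj_self, ← Complex.ofReal_add, h₁ z hz]
      norm_num
    have e3 := horth z hz
    have e4 : z * conj z = 1 := by
      rw [Complex.mul_conj, Complex.normSq_eq_norm_sq, hz]
      norm_num
    rw [h₂ z, hlamdef]
    simp only
    linear_combination (-(m₂' z) / 2) * e1 + (m₁ z / 2) * e3 -
      ((m₁ (-z) * m₂' z - m₁ z * m₂' (-z)) * conj (m₁ (-z)) / 2) * e4
  have key2 : ∀ z : ℂ, ‖z‖ = 1 → m₂' (-z) = lam z * m₂ (-z) := by
    intro z hz
    rw [← lam_even z]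
    exact key (-z) (by simpa using hz)
  have unim : ∀ z : ℂ, ‖z‖ = 1 → ‖lam z‖ = 1 := by
    intro z hz
    have hm2 : ‖m₂ z‖ = ‖m₁ (-z)‖ := by
      rw [h₂ z]
      simp [norm_mul, Complex.norm_conj, hz]
    have hm2' : ‖m₂ (-z)‖ = ‖m₁ z‖ := by
      rw [h₂ (-z)]
      simp [norm_mul, Complex.norm_conj, hz]
    have h5 := h₂' z hz
    rw [key z hz, key2 z hz, norm_mul, norm_mul, hm2, hm2'] at h5
    have h6 := h₁ z hz
    have hL2 : ‖lam z‖ ^ 2 = 1 := by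
      linear_combination h5 / 2 - (‖lam z‖ ^ 2 / 2) * h6
    have hfac : (‖lam z‖ - 1) * (‖lam z‖ + 1) = 0 := by
      linear_combination hL2
    rcases mul_eq_zero.1 hfac with h | h
    · exact sub_eq_zero.1 h
    · exfalso
      have := norm_nonneg (lam z)
      have := eq_neg_of_add_eq_zero_left h
      linarith
  have sq_half : ∀ u : ℂ, u ≠ 0 → (u ^ ((1 : ℂ)/2)) ^ 2 = u := by
    intro u hu
    rw [sq, ← Complex.cpow_add _ _ hu]
    norm_num
  have branch : ∀ z : ℂ, z ≠ 0 → ∀ w : ℂ, w ^ 2 = z ^ 2 → lam w = lam z := by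
    intro z hz w h
    have h0 : (w - z) * (w + z) = 0 := by linear_combination h
    rcases mul_eq_zero.1 h0 with h' | h'
    · rw [sub_eq_zero.1 h']
    · rw [show w = -z from eq_neg_of_add_eq_zero_left h', lam_even]
  have theta_sq : ∀ z : ℂ, z ≠ 0 → lam ((z ^ 2) ^ ((1 : ℂ)/2)) = lam z := by
    intro z hz
    exact branch z hz _ (sq_half _ (pow_ne_zero 2 hz))
  have abs_half : ∀ u : ℂ, ‖u‖ = 1 → ‖u ^ ((1 : ℂ)/2)‖ = 1 := by
    intro u hu
    have hu0 : u ≠ 0 := by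
      intro h; rw [h] at hu; simp at hu
    have h1 : ‖u ^ ((1 : ℂ)/2)‖ ^ 2 = 1 := by
      rw [← norm_pow, sq_half u hu0, hu]
    nlinarith [norm_nonneg (u ^ ((1 : ℂ)/2))]
  have memS : ∀ u : ℂ, ‖u‖ = 1 → u ∈ Metric.sphere (0 : ℂ) 1 := by
    intro u hu
    rw [mem_sphere_zero_iff_norm, hu]
  have absS : ∀ u : ℂ, u ∈ Metric.sphere (0 : ℂ) 1 → ‖u‖ = 1 := by
    intro u hu
    rw [mem_sphere_zero_iff_norm] at hu
    exact hu
  have lam_cont : ContinuousOn lam (Metric.sphere (0 : ℂ) 1) := by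
    have hneg : Set.MapsTo (fun z : ℂ => -z) (Metric.sphere (0 : ℂ) 1)
        (Metric.sphere (0 : ℂ) 1) := by
      intro z hz
      exact memS _ (by simpa using absS z hz)
    have hm₁n : ContinuousOn (fun z : ℂ => m₁ (-z)) (Metric.sphere (0 : ℂ) 1) :=
      hm₁c.comp continuous_neg.continuousOn hneg
    have hm₂'n : ContinuousOn (fun z : ℂ => m₂' (-z)) (Metric.sphere (0 : ℂ) 1) :=
      hm₂'c.comp continuous_neg.continuousOn hneg
    have hconj : ContinuousOn (fun z : ℂ => conj z) (Metric.sphere (0 : ℂ) 1) :=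
      Complex.continuous_conj.continuousOn
    exact ((hconj.mul ((hm₁n.mul hm₂'c).sub (hm₁c.mul hm₂'n)))).div_const 2
  refine ⟨fun u => lam (u ^ ((1 : ℂ)/2)), ?_, ?_, ?_⟩
  · -- continuity
    intro u hu
    have huabs := absS u hu
    have hu0 : u ≠ 0 := by
      intro h; rw [h] at huabs; simp at huabs
    have mapsTo : Set.MapsTo (fun v : ℂ => v ^ ((1 : ℂ)/2)) (Metric.sphere (0 : ℂ) 1)
        (Metric.sphere (0 : ℂ) 1) := by
      intro v hv
      exact memS _ (abs_half v (absS v hv))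
    by_cases hs : u ∈ Complex.slitPlane
    · exact ContinuousWithinAt.comp (g := lam) (f := fun v : ℂ => v ^ ((1 : ℂ)/2))
        (t := Metric.sphere (0 : ℂ) 1)
        (lam_cont.continuousWithinAt (mapsTo hu))
        (continuousAt_cpow_const hs).continuousWithinAt mapsTo
    · -- u = -1; use the other branch
      set g : ℂ → ℂ := fun v => lam (Complex.I * (-v) ^ ((1 : ℂ)/2)) with hgdef
      have hg_eq : ∀ v : ℂ, v ≠ 0 → lam (v ^ ((1 : ℂ)/2)) = g v := by
        intro v hv
        have hz0 : v ^ ((1 : ℂ)/2) ≠ 0 := by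
          intro h
          apply hv
          rw [← sq_half v hv, h]
          simp
        have hsq : (Complex.I * (-v) ^ ((1 : ℂ)/2)) ^ 2 = (v ^ ((1 : ℂ)/2)) ^ 2 := by
          rw [mul_pow, Complex.I_sq, sq_half (-v) (neg_ne_zero.2 hv), sq_half v hv]
          ring
        exact (branch _ hz0 _ hsq).symm
      have hnu : -u ∈ Complex.slitPlane := by
        rw [Complex.mem_slitPlane_iff] at hs ⊢
        push_neg at hs
        obtain ⟨h1, h2⟩ := hs
        left
        simp only [Complex.neg_re]
        have habs' : |u.re| = ‖u‖ := by
          rw [Complex.norm_def, Complex.normSq_apply, h2,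
            show u.re * u.re + 0 * 0 = u.re ^ 2 by ring, Real.sqrt_sq_eq_abs]
        rw [abs_of_nonpos h1] at habs'
        rw [huabs] at habs'
        linarith
      have hgc : ContinuousWithinAt g (Metric.sphere (0 : ℂ) 1) u := by
        have hinner : ContinuousAt (fun v : ℂ => Complex.I * (-v) ^ ((1 : ℂ)/2)) u := by
          have h1 : ContinuousAt (fun v : ℂ => (-v) ^ ((1 : ℂ)/2)) u :=
            (continuousAt_cpow_const hnu).comp continuous_neg.continuousAt
          exact continuousAt_const.mul h1
        have mapsTo' : Set.MapsTo (fun v : ℂ => Complex.I * (-v) ^ ((1 : ℂ)/2))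
            (Metric.sphere (0 : ℂ) 1) (Metric.sphere (0 : ℂ) 1) := by
          intro v hv
          apply memS
          rw [norm_mul, Complex.norm_I, one_mul]
          exact abs_half (-v) (by simpa using absS v hv)
        exact ContinuousWithinAt.comp (g := lam)
          (f := fun v : ℂ => Complex.I * (-v) ^ ((1 : ℂ)/2))
          (t := Metric.sphere (0 : ℂ) 1)
          (lam_cont.continuousWithinAt (mapsTo' hu))
          hinner.continuousWithinAt mapsTo'
      refine hgc.congr ?_ (hg_eq u hu0)
      intro v hv
      have hv0 : v ≠ 0 := by
        intro h
        have := absS v hv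
        rw [h] at this; simp at this
      exact hg_eq v hv0
  · intro u hu
    exact unim _ (abs_half u hu)
  · intro z hz
    have hz0 : z ≠ 0 := by
      intro h; rw [h] at hz; simp at hz
    show m₂' z = lam ((z ^ 2) ^ ((1 : ℂ)/2)) * m₂ z
    rw [theta_sq z hz0]
    exact key z hz
end

section
/- Let 𝕋 = {z ∈ ℂ : |z| = 1} with its normalized Haar (arc-length) probability measure μ, and let m : 𝕋 → ℂ be an essentially bounded measurable function with |m(z)|² + |m(−z)|² = 2 for μ-almost every z ∈ 𝕋. Then the operator S_m on L²(𝕋, μ) defined by (S_m ξ)(z) = m(z)·ξ(z²) is a well-defined linear isometry. -/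
open MeasureTheory ComplexConjugate

/-- The normalized Haar (arc-length) probability measure on the unit circle
`𝕋 = {z ∈ ℂ : |z| = 1}`, realized as a measure on `ℂ`: the pushforward of Lebesgue
measure on `(0, 1]` under `t ↦ e^{2πit}`. -/
noncomputable def haarCircle : Measure ℂ :=
  Measure.map (fun t : ℝ => Complex.exp (2 * Real.pi * Complex.I * t))
    (volume.restrict (Set.Ioc (0 : ℝ) 1))

open scoped ENNReal NNReal

namespace HaarCircleAux

noncomputable def φ : ℝ → ℂ := fun t => Complex.exp (2 * Real.pi * Complex.I * t)

lemma φ_measurable : Measurable φ :=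
  Complex.measurable_exp.comp (measurable_const.mul Complex.measurable_ofReal)

lemma φ_period (t : ℝ) : φ (1 + t) = φ t := by
  unfold φ
  push_cast
  rw [show 2 * (Real.pi : ℂ) * Complex.I * (1 + t)
      = 2 * Real.pi * Complex.I + 2 * Real.pi * Complex.I * t by ring,
    Complex.exp_add, Complex.exp_two_pi_mul_I, one_mul]

lemma φ_half (t : ℝ) : φ (1 / 2 + t) = -φ t := by
  unfold φ
  push_cast
  rw [show 2 * (Real.pi : ℂ) * Complex.I * (1 / 2 + t)
      = Real.pi * Complex.I + 2 * Real.pi * Complex.I * t by ring,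
    Complex.exp_add, Complex.exp_pi_mul_I]
  ring

lemma φ_double (t : ℝ) : φ t ^ 2 = φ (2 * t) := by
  unfold φ
  push_cast
  rw [sq, ← Complex.exp_add]
  ring_nf

/-- Shifting the interval by 1 does not change the pushforward. -/
lemma map_shift (a b : ℝ) :
    Measure.map φ (volume.restrict (Set.Ioc (1 + a) (1 + b)))
      = Measure.map φ (volume.restrict (Set.Ioc a b)) := by
  have h : MeasurePreserving (fun t : ℝ => 1 + t)
      (volume.restrict (Set.Ioc a b)) (volume.restrict (Set.Ioc (1 + a) (1 + b))) := by
    have h := (measurePreserving_add_left (volume : Measure ℝ) 1).restrict_image_emb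
      (MeasurableEquiv.addLeft (1 : ℝ)).measurableEmbedding (Set.Ioc a b)
    rwa [Set.image_const_add_Ioc] at h
  rw [← h.map_eq, Measure.map_map φ_measurable (measurable_const_add 1)]
  congr 1
  funext t
  exact φ_period t

lemma haar_eq : haarCircle = Measure.map φ (volume.restrict (Set.Ioc (0 : ℝ) 1)) := rfl

lemma map_neg_haar : Measure.map (fun z : ℂ => -z) haarCircle = haarCircle := by
  rw [haar_eq, Measure.map_map measurable_neg φ_measurable]
  have h1 : (fun z : ℂ => -z) ∘ φ = φ ∘ (fun t : ℝ => 1 / 2 + t) := by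
    funext t
    show -φ t = φ (1 / 2 + t)
    exact (φ_half t).symm
  rw [h1, ← Measure.map_map φ_measurable (measurable_const_add _)]
  have h2 : Measure.map (fun t : ℝ => 1 / 2 + t) (volume.restrict (Set.Ioc (0 : ℝ) 1))
      = volume.restrict (Set.Ioc (1 / 2 : ℝ) (3 / 2)) := by
    have := (measurePreserving_add_left (volume : Measure ℝ) (1 / 2)).restrict_image_emb
      (MeasurableEquiv.addLeft (1 / 2 : ℝ)).measurableEmbedding (Set.Ioc (0 : ℝ) 1)
    have h3 := this.map_eq
    rw [Set.image_const_add_Ioc] at h3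
    norm_num at h3 ⊢
    exact h3
  rw [h2]
  have hsplit : volume.restrict (Set.Ioc (1 / 2 : ℝ) (3 / 2))
      = volume.restrict (Set.Ioc (1 / 2 : ℝ) 1) + volume.restrict (Set.Ioc (1 : ℝ) (3 / 2)) := by
    rw [← Measure.restrict_union (Set.Ioc_disjoint_Ioc_of_le le_rfl) measurableSet_Ioc,
      Set.Ioc_union_Ioc_eq_Ioc (by norm_num) (by norm_num)]
  rw [hsplit, Measure.map_add _ _ φ_measurable]
  have h4 : Measure.map φ (volume.restrict (Set.Ioc (1 : ℝ) (3 / 2)))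
      = Measure.map φ (volume.restrict (Set.Ioc (0 : ℝ) (1 / 2))) := by
    have := map_shift 0 (1 / 2)
    norm_num at this ⊢
    exact this
  rw [h4, ← Measure.map_add _ _ φ_measurable, add_comm, ← Measure.restrict_union
      (Set.Ioc_disjoint_Ioc_of_le le_rfl) measurableSet_Ioc,
    Set.Ioc_union_Ioc_eq_Ioc (by norm_num) (by norm_num)]

lemma measurable_sq : Measurable (fun z : ℂ => z ^ 2) := measurable_id.pow_const 2

lemma map_sq_haar : Measure.map (fun z : ℂ => z ^ 2) haarCircle = haarCircle := by
  rw [haar_eq, Measure.map_map measurable_sq φ_measurable]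
  have h1 : (fun z : ℂ => z ^ 2) ∘ φ = φ ∘ (fun t : ℝ => 2 * t) := by
    funext t
    show φ t ^ 2 = φ (2 * t)
    exact φ_double t
  rw [h1, ← Measure.map_map φ_measurable (measurable_const_mul 2)]
  have hemb : MeasurableEmbedding (fun t : ℝ => 2 * t) :=
    (Homeomorph.mulLeft₀ (2 : ℝ) two_ne_zero).measurableEmbedding
  have hpre : (fun t : ℝ => 2 * t) ⁻¹' Set.Ioc (0 : ℝ) 2 = Set.Ioc (0 : ℝ) 1 := by
    rw [Set.preimage_const_mul_Ioc₀ _ _ (by norm_num : (0:ℝ) < 2)]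
    norm_num
  have h2 : Measure.map (fun t : ℝ => 2 * t) (volume.restrict (Set.Ioc (0 : ℝ) 1))
      = ENNReal.ofReal (1 / 2) • volume.restrict (Set.Ioc (0 : ℝ) 2) := by
    rw [← hpre, ← hemb.restrict_map, Real.map_volume_mul_left (by norm_num : (2:ℝ) ≠ 0)]
    norm_num [Measure.restrict_smul, abs_of_nonneg]
  rw [h2, Measure.map_smul]
  have hsplit : volume.restrict (Set.Ioc (0 : ℝ) 2)
      = volume.restrict (Set.Ioc (0 : ℝ) 1) + volume.restrict (Set.Ioc (1 : ℝ) 2) := by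
    rw [← Measure.restrict_union (Set.Ioc_disjoint_Ioc_of_le le_rfl) measurableSet_Ioc,
      Set.Ioc_union_Ioc_eq_Ioc (by norm_num) (by norm_num)]
  rw [hsplit, Measure.map_add _ _ φ_measurable]
  have h3 : Measure.map φ (volume.restrict (Set.Ioc (1 : ℝ) 2))
      = Measure.map φ (volume.restrict (Set.Ioc (0 : ℝ) 1)) := by
    have := map_shift 0 1
    norm_num at this ⊢
    exact this
  rw [h3, ← haar_eq]
  ext s hs
  simp only [Measure.smul_apply, Measure.add_apply, smul_eq_mul]
  rw [← two_mul, ← mul_assoc]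
  have h5 : ENNReal.ofReal (1 / 2) * 2 = 1 := by
    rw [show ((2 : ℝ≥0∞)) = ENNReal.ofReal 2 by norm_num,
      ← ENNReal.ofReal_mul (by norm_num)]
    norm_num
  rw [h5, one_mul]

lemma mp_neg : MeasurePreserving (fun z : ℂ => -z) haarCircle haarCircle :=
  ⟨measurable_neg, map_neg_haar⟩

lemma mp_sq : MeasurePreserving (fun z : ℂ => z ^ 2) haarCircle haarCircle :=
  ⟨measurable_sq, map_sq_haar⟩

/-- The key integral identity, for a measurable representative. -/
lemma key (m : ℂ → ℂ) (hmeas : Measurable m)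
    (hfil : ∀ᵐ z ∂haarCircle,
      ‖m z‖ ^ 2 + ‖m (-z)‖ ^ 2 = 2)
    (f : ℂ → ℂ) (hf : Measurable f) :
    ∫⁻ z, (‖m z * f (z ^ 2)‖₊ : ℝ≥0∞) ^ 2 ∂haarCircle
      = ∫⁻ z, (‖f z‖₊ : ℝ≥0∞) ^ 2 ∂haarCircle := by
  set μ := haarCircle
  set M : ℂ → ℝ≥0∞ := fun z => (‖m z‖₊ : ℝ≥0∞) ^ 2 with hM
  set F : ℂ → ℝ≥0∞ := fun z => (‖f z‖₊ : ℝ≥0∞) ^ 2 with hF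
  have hMm : Measurable M := (hmeas.nnnorm.coe_nnreal_ennreal).pow_const 2
  have hFm : Measurable F := (hf.nnnorm.coe_nnreal_ennreal).pow_const 2
  have hFsq : Measurable (fun z : ℂ => F (z ^ 2)) := hFm.comp measurable_sq
  have hprod : Measurable (fun z : ℂ => M z * F (z ^ 2)) := hMm.mul hFsq
  have hint : (fun z => (‖m z * f (z ^ 2)‖₊ : ℝ≥0∞) ^ 2) = fun z => M z * F (z ^ 2) := by
    funext z
    simp [hM, hF, nnnorm_mul, ENNReal.coe_mul, mul_pow]
  rw [hint]
  -- negation invariance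
  have h1 : ∫⁻ z, M z * F (z ^ 2) ∂μ = ∫⁻ z, M (-z) * F (z ^ 2) ∂μ := by
    have := mp_neg.lintegral_comp (f := fun z => M z * F (z ^ 2)) hprod
    simp only [neg_sq] at this
    exact this.symm
  -- a.e. identity in ℝ≥0∞
  have h2 : ∀ᵐ z ∂μ, M z + M (-z) = 2 := by
    filter_upwards [hfil] with z hz
    have hz' : ‖m z‖₊ ^ 2 + ‖m (-z)‖₊ ^ 2 = (2 : ℝ≥0) := by
      apply NNReal.coe_injective
      push_cast
      simpa using hz
    rw [hM]
    simp only []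
    rw [← ENNReal.coe_pow, ← ENNReal.coe_pow, ← ENNReal.coe_add, hz']
    norm_num
  have h3 : (2 : ℝ≥0∞) * ∫⁻ z, M z * F (z ^ 2) ∂μ
      = (2 : ℝ≥0∞) * ∫⁻ z, F z ∂μ := by
    calc (2 : ℝ≥0∞) * ∫⁻ z, M z * F (z ^ 2) ∂μ
        = (∫⁻ z, M z * F (z ^ 2) ∂μ) + ∫⁻ z, M (-z) * F (z ^ 2) ∂μ := by
          rw [← h1, two_mul]
      _ = ∫⁻ z, (M z + M (-z)) * F (z ^ 2) ∂μ := by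
          have hr : ∀ z : ℂ, (M z + M (-z)) * F (z ^ 2)
              = M z * F (z ^ 2) + M (-z) * F (z ^ 2) := fun z => by ring
          simp only [hr]
          rw [lintegral_add_left hprod]
      _ = ∫⁻ z, 2 * F (z ^ 2) ∂μ := by
          apply lintegral_congr_ae
          filter_upwards [h2] with z hz
          rw [hz]
      _ = (2 : ℝ≥0∞) * ∫⁻ z, F (z ^ 2) ∂μ := by
          rw [lintegral_const_mul _ hFsq]
      _ = (2 : ℝ≥0∞) * ∫⁻ z, F z ∂μ := by
          rw [mp_sq.lintegral_comp hFm]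
  exact (ENNReal.mul_right_inj (by norm_num) (by norm_num)).mp h3

end HaarCircleAux

open HaarCircleAux in
/-- For an essentially bounded measurable `m : 𝕋 → ℂ` with `|m(z)|² + |m(−z)|² = 2`
a.e., the operator `(S_m ξ)(z) = m(z) ξ(z²)` on `L²(𝕋, μ)` is a well-defined linear
isometry. -/
theorem stmt7 (m : ℂ → ℂ) (hmeas : Measurable m)
    (hbd : ∃ C : ℝ, ∀ᵐ z ∂haarCircle, ‖m z‖ ≤ C)
    (hfil : ∀ᵐ z ∂haarCircle,
      ‖m z‖ ^ 2 + ‖m (-z)‖ ^ 2 = 2) :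
    ∃ S : Lp ℂ 2 haarCircle →ₗ[ℂ] Lp ℂ 2 haarCircle,
      (∀ ξ : Lp ℂ 2 haarCircle,
        ⇑(S ξ) =ᵐ[haarCircle] fun z => m z * ξ (z ^ 2)) ∧
      (∀ ξ : Lp ℂ 2 haarCircle, ‖S ξ‖ = ‖ξ‖) := by
  set μ := haarCircle with hμ
  have hqmp : Measure.QuasiMeasurePreserving (fun z : ℂ => z ^ 2) μ μ :=
    mp_sq.quasiMeasurePreserving
  -- eLpNorm identity
  have hnorm : ∀ ξ : Lp ℂ 2 μ,
      eLpNorm (fun z => m z * ξ (z ^ 2)) 2 μ = eLpNorm (⇑ξ) 2 μ := by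
    intro ξ
    set f₀ := (Lp.aestronglyMeasurable ξ).mk with hf₀
    have hf₀m : Measurable f₀ := (Lp.aestronglyMeasurable ξ).stronglyMeasurable_mk.measurable
    have hae : ⇑ξ =ᵐ[μ] f₀ := (Lp.aestronglyMeasurable ξ).ae_eq_mk
    have hcomp : (fun z => (ξ : ℂ → ℂ) (z ^ 2)) =ᵐ[μ] fun z => f₀ (z ^ 2) :=
      hqmp.ae_eq_comp hae
    have hg : (fun z => m z * (ξ : ℂ → ℂ) (z ^ 2)) =ᵐ[μ] fun z => m z * f₀ (z ^ 2) := by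
      filter_upwards [hcomp] with z hz
      rw [hz]
    rw [eLpNorm_congr_ae hg, eLpNorm_congr_ae hae,
      eLpNorm_eq_lintegral_rpow_enorm_toReal (by norm_num) (by norm_num),
      eLpNorm_eq_lintegral_rpow_enorm_toReal (by norm_num) (by norm_num)]
    congr 1
    have h2 : ((2 : ℝ≥0∞).toReal) = (2 : ℝ) := by norm_num
    simp only [h2]
    have hrw : ∀ g : ℂ → ℂ, (fun z => ((‖g z‖₊ : ℝ≥0∞)) ^ (2 : ℝ)) =
        fun z => ((‖g z‖₊ : ℝ≥0∞)) ^ (2 : ℕ) := by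
      intro g; funext z; rw [← ENNReal.rpow_natCast]; norm_num
    calc ∫⁻ z, (‖m z * f₀ (z ^ 2)‖₊ : ℝ≥0∞) ^ (2 : ℝ) ∂μ
        = ∫⁻ z, (‖m z * f₀ (z ^ 2)‖₊ : ℝ≥0∞) ^ (2 : ℕ) ∂μ := by rw [hrw]
      _ = ∫⁻ z, (‖f₀ z‖₊ : ℝ≥0∞) ^ (2 : ℕ) ∂μ := key m hmeas hfil f₀ hf₀m
      _ = ∫⁻ z, (‖f₀ z‖₊ : ℝ≥0∞) ^ (2 : ℝ) ∂μ := by rw [hrw]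
  -- membership in L²
  have hmem : ∀ ξ : Lp ℂ 2 μ, MemLp (fun z => m z * ξ (z ^ 2)) 2 μ := by
    intro ξ
    refine ⟨hmeas.aestronglyMeasurable.mul
      ((Lp.aestronglyMeasurable ξ).comp_quasiMeasurePreserving hqmp), ?_⟩
    rw [hnorm ξ]
    exact Lp.eLpNorm_lt_top ξ
  refine ⟨{ toFun := fun ξ => (hmem ξ).toLp _
            map_add' := ?_
            map_smul' := ?_ }, ?_, ?_⟩
  · intro ξ η
    apply Lp.ext
    have h1 := (hmem (ξ + η)).coeFn_toLp
    have h2 := (hmem ξ).coeFn_toLp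
    have h3 := (hmem η).coeFn_toLp
    have h4 := Lp.coeFn_add ((hmem ξ).toLp _) ((hmem η).toLp _)
    have h5 : (fun z => (↑(ξ + η) : ℂ → ℂ) (z ^ 2)) =ᵐ[μ]
        fun z => (ξ : ℂ → ℂ) (z ^ 2) + (η : ℂ → ℂ) (z ^ 2) :=
      hqmp.ae_eq_comp (Lp.coeFn_add ξ η)
    filter_upwards [h1, h2, h3, h4, h5] with z hz1 hz2 hz3 hz4 hz5
    rw [hz1, hz4]
    simp only [Pi.add_apply]
    rw [hz2, hz3, hz5]
    ring
  · intro c ξ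
    simp only [RingHom.id_apply]
    apply Lp.ext
    have h1 := (hmem (c • ξ)).coeFn_toLp
    have h2 := (hmem ξ).coeFn_toLp
    have h4 := Lp.coeFn_smul c ((hmem ξ).toLp _)
    have h5 : (fun z => (↑(c • ξ) : ℂ → ℂ) (z ^ 2)) =ᵐ[μ]
        fun z => c • (ξ : ℂ → ℂ) (z ^ 2) :=
      hqmp.ae_eq_comp (Lp.coeFn_smul c ξ)
    filter_upwards [h1, h2, h4, h5] with z hz1 hz2 hz4 hz5
    rw [hz1, hz4]
    simp only [Pi.smul_apply, RingHom.id_apply]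
    rw [hz2, hz5]
    simp [smul_eq_mul]
    ring
  · intro ξ
    exact (hmem ξ).coeFn_toLp
  · intro ξ
    simp only [LinearMap.coe_mk, AddHom.coe_mk]
    rw [Lp.norm_toLp _ (hmem ξ), hnorm ξ, Lp.norm_def]
end

section
/- Let 𝕋 = {z ∈ ℂ : |z| = 1} with normalized Haar probability measure μ, and let (m₁, m₂) be a filter bank of bounded measurable functions on 𝕋: |mᵢ(z)|² + |mᵢ(−z)|² = 2 for a.e. z (i = 1, 2) and conj(m₁(z))·m₂(z) + conj(m₁(−z))·m₂(−z) = 0 for a.e. z. Let Sᵢ = S_{mᵢ} be the operators on L²(𝕋, μ) given by (Sᵢξ)(z) = mᵢ(z)·ξ(z²). Then (S₁, S₂) is a Cuntz family: S₁*S₁ = S₂*S₂ = I, S₁*S₂ = 0, and S₁S₁* + S₂S₂* = I. -/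
set_option maxHeartbeats 4000000
set_option linter.unusedVariables false

open MeasureTheory ComplexConjugate ContinuousLinearMap intervalIntegral Real Set

noncomputable def ee (t : ℝ) : ℂ := Complex.exp (2 * Real.pi * Complex.I * t)

lemma ee_cont : Continuous ee := by
  unfold ee; fun_prop

lemma ee_meas : Measurable ee := ee_cont.measurable

lemma haarCircle_eq : haarCircle = Measure.map ee (volume.restrict (Set.Ioc (0:ℝ) 1)) := rfl

lemma ee_add_one (t : ℝ) : ee (t + 1) = ee t := by
  unfold ee
  rw [show ((2:ℂ) * Real.pi * Complex.I * ((t:ℝ)+1:ℝ)) =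
      2*Real.pi*Complex.I*(t:ℝ) + 2*Real.pi*Complex.I by push_cast; ring,
    Complex.exp_add, Complex.exp_two_pi_mul_I, mul_one]

lemma ee_add_half (t : ℝ) : ee (t + 1/2) = - ee t := by
  unfold ee
  rw [show ((2:ℂ) * Real.pi * Complex.I * ((t+1/2:ℝ):ℝ)) =
      2*Real.pi*Complex.I*(t:ℝ) + Real.pi * Complex.I by push_cast; ring,
    Complex.exp_add, Complex.exp_pi_mul_I]
  ring

lemma ee_sq (t : ℝ) : (ee t) ^ 2 = ee (2 * t) := by
  unfold ee
  rw [sq, ← Complex.exp_add]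
  congr 1
  push_cast; ring

instance : IsProbabilityMeasure haarCircle := by
  constructor
  rw [haarCircle_eq, Measure.map_apply ee_meas MeasurableSet.univ]
  simp

lemma solve2 {a₁ b₁ a₂ b₂ x y : ℂ}
    (h1 : conj a₁ * a₁ + conj b₁ * b₁ = 2) (h2 : conj a₂ * a₂ + conj b₂ * b₂ = 2)
    (h3 : conj a₁ * a₂ + conj b₁ * b₂ = 0)
    (e1 : x * a₁ + y * b₁ = 0) (e2 : x * a₂ + y * b₂ = 0) : x = 0 ∧ y = 0 := by
  have h3' : a₁ * conj a₂ + b₁ * conj b₂ = 0 := by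
    have := congrArg (starRingEnd ℂ) h3
    simpa [mul_comm] using this
  set d := a₁ * b₂ - a₂ * b₁ with hdd
  have hd : d * (conj a₁ * conj b₂ - conj a₂ * conj b₁) = 4 := by
    have h : d * (conj a₁ * conj b₂ - conj a₂ * conj b₁)
        = (conj a₁ * a₁ + conj b₁ * b₁) * (conj a₂ * a₂ + conj b₂ * b₂)
          - (conj a₁ * a₂ + conj b₁ * b₂) * (a₁ * conj a₂ + b₁ * conj b₂) := by
      rw [hdd]; ring
    rw [h, h1, h2, h3, h3']; ring
  have hdne : d ≠ 0 := by
    intro h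
    rw [h, zero_mul] at hd
    exact (by norm_num : (0:ℂ) ≠ 4) hd
  constructor
  · have hdx : x * d = 0 := by
      have h : x * d = (x*a₁ + y*b₁) * b₂ - (x*a₂ + y*b₂)*b₁ := by rw [hdd]; ring
      rw [h, e1, e2]; ring
    rcases mul_eq_zero.mp hdx with h | h
    · exact h
    · exact absurd h hdne
  · have hdy : y * d = 0 := by
      have h : y * d = (x*a₂ + y*b₂)*a₁ - (x*a₁ + y*b₁) * a₂ := by rw [hdd]; ring
      rw [h, e1, e2]; ring
    rcases mul_eq_zero.mp hdy with h | h
    · exact h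
    · exact absurd h hdne


lemma null_preimage_affine {a b : ℝ} (ha : a ≠ 0) {N : Set ℝ} (hN : volume N = 0) :
    volume ((fun x => a * x + b) ⁻¹' N) = 0 := by
  have h : (fun x : ℝ => a * x + b) ⁻¹' N = (a * ·) ⁻¹' ((· + b) ⁻¹' N) := rfl
  rw [h, Real.volume_preimage_mul_left ha]
  have h2 : volume ((· + b) ⁻¹' N : Set ℝ) = 0 := by
    rw [show ((· + b) ⁻¹' N : Set ℝ) = (fun x => x + b) ⁻¹' N from rfl]
    rw [measure_preimage_add_right volume b N, hN]
  rw [h2, mul_zero]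

lemma ae_affine {a b : ℝ} (ha : a ≠ 0) {P : ℝ → Prop} (h : ∀ᵐ t ∂(volume : Measure ℝ), P t) :
    ∀ᵐ s ∂(volume : Measure ℝ), P (a * s + b) := by
  rw [ae_iff] at h ⊢
  have hsub : {s | ¬ P (a * s + b)} = (fun s => a * s + b) ⁻¹' {t | ¬ P t} := rfl
  rw [hsub]
  exact null_preimage_affine ha h

lemma halves (φ : ℝ → ℂ) (h1 : IntervalIntegrable φ volume 0 (1/2))
    (h2 : IntervalIntegrable φ volume (1/2) 1) :
    (IntervalIntegrable (fun s => φ (s/2) + φ (s/2 + 1/2)) volume 0 1) ∧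
    ∫ t in (0:ℝ)..1, φ t
      = (1/2 : ℂ) * ∫ s in (0:ℝ)..1, (φ (s/2) + φ (s/2 + 1/2)) := by
  have iA : IntervalIntegrable (fun s => φ (s/2)) volume 0 1 := by
    have h := h1.comp_mul_left (c := 1/2)
    norm_num at h
    have he : (fun x : ℝ => φ (1 / 2 * x)) = fun s => φ (s/2) := by
      funext s; congr 1; ring
    rwa [he] at h
  have iB : IntervalIntegrable (fun s => φ (s/2 + 1/2)) volume 0 1 := by
    have hb := h2.comp_add_right (1/2)
    norm_num at hb
    have h := hb.comp_mul_left (c := 1/2)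
    norm_num at h
    have he : (fun x : ℝ => φ (1 / 2 * x + 1 / 2)) = fun s => φ (s/2 + 1/2) := by
      funext s; congr 1; ring
    rwa [he] at h
  refine ⟨iA.add iB, ?_⟩
  have hsplit : ∫ t in (0:ℝ)..1, φ t = (∫ t in (0:ℝ)..(1/2), φ t) + ∫ t in (1/2:ℝ)..1, φ t :=
    (integral_add_adjacent_intervals h1 h2).symm
  have e1 : ∫ s in (0:ℝ)..1, φ (s/2) = (2:ℝ) • ∫ t in (0:ℝ)..(1/2), φ t := by
    rw [integral_comp_div (c := 2) φ two_ne_zero]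
    norm_num
  have e2 : ∫ s in (0:ℝ)..1, φ (s/2 + 1/2) = (2:ℝ) • ∫ t in (1/2:ℝ)..1, φ t := by
    rw [integral_comp_div (c := 2) (fun u => φ (u + 1/2)) two_ne_zero]
    rw [integral_comp_add_right φ (1/2)]
    norm_num
  rw [integral_add iA iB, e1, e2, hsplit]
  rw [Complex.real_smul, Complex.real_smul]
  push_cast
  ring



noncomputable def tau (w : ℂ) : ℝ :=
  if 0 < Complex.arg w then Complex.arg w / (2 * Real.pi) else Complex.arg w / (2 * Real.pi) + 1

lemma tau_meas : Measurable tau := by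
  unfold tau
  apply Measurable.ite
  · exact measurableSet_lt measurable_const Complex.measurable_arg
  · exact Complex.measurable_arg.div measurable_const
  · exact (Complex.measurable_arg.div measurable_const).add measurable_const

lemma ee_eq_exp_mul_I (s : ℝ) : ee s = Complex.exp ((2 * Real.pi * s : ℝ) * Complex.I) := by
  unfold ee; congr 1; push_cast; ring

lemma arg_ee {s : ℝ} (hs : s ∈ Set.Ioc (0:ℝ) 1) :
    Complex.arg (ee s) = if s ≤ 1/2 then 2*Real.pi*s else 2*Real.pi*s - 2*Real.pi := by
  obtain ⟨hs0, hs1⟩ := hs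
  rw [ee_eq_exp_mul_I, Complex.arg_exp_mul_I]
  by_cases h : s ≤ 1/2
  · rw [if_pos h]
    exact (toIocMod_eq_self (mul_pos two_pos Real.pi_pos)).2 ⟨by nlinarith [Real.pi_pos], by nlinarith [Real.pi_pos]⟩
  · have h' : 1/2 < s := lt_of_not_ge h
    rw [if_neg h]
    have key : toIocMod (mul_pos two_pos Real.pi_pos) (-Real.pi) (2*Real.pi*s)
        = 2*Real.pi*s - 2*Real.pi := by
      have e : (2*Real.pi*s) = (2*Real.pi*s - 2*Real.pi) + 2*Real.pi := by ring
      conv_lhs => rw [e]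
      rw [toIocMod_add_right]
      refine (toIocMod_eq_self (mul_pos two_pos Real.pi_pos)).2 ⟨?_, ?_⟩
      · nlinarith [mul_pos Real.pi_pos (show (0:ℝ) < 2*s-1 by linarith)]
      · nlinarith [mul_nonneg Real.pi_pos.le (show (0:ℝ) ≤ 3-2*s by linarith)]
    exact key
lemma tau_ee {s : ℝ} (hs : s ∈ Set.Ioc (0:ℝ) 1) : tau (ee s) = s := by
  have hpi := Real.pi_pos
  unfold tau
  rw [arg_ee hs]
  obtain ⟨hs0, hs1⟩ := hs
  by_cases h : s ≤ 1/2
  · rw [if_pos h, if_pos (by positivity)]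
    field_simp
  · rw [if_neg h, if_neg (by push_neg at h ⊢; nlinarith)]
    field_simp
    ring


lemma integral_pull (f : ℂ → ℂ) (hf : AEStronglyMeasurable f haarCircle) :
    ∫ z, f z ∂haarCircle = ∫ t in Set.Ioc (0:ℝ) 1, f (ee t) := by
  rw [haarCircle_eq] at hf ⊢
  exact integral_map ee_meas.aemeasurable hf

lemma integrable_pull {f : ℂ → ℂ} (hf : Integrable f haarCircle) :
    Integrable (fun t => f (ee t)) (volume.restrict (Set.Ioc (0:ℝ) 1)) := by
  rw [haarCircle_eq] at hf
  exact (integrable_map_measure hf.aestronglyMeasurable ee_meas.aemeasurable).1 hf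

lemma ae_pull {P : ℂ → Prop} (h : ∀ᵐ z ∂haarCircle, P z) :
    ∀ᵐ t ∂(volume : Measure ℝ), t ∈ Set.Ioc (0:ℝ) 1 → P (ee t) := by
  rw [haarCircle_eq] at h
  exact (ae_restrict_iff' measurableSet_Ioc).1 (ae_of_ae_map ee_meas.aemeasurable h)

lemma ae_half_pull {P : ℂ → Prop} (h : ∀ᵐ z ∂haarCircle, P z) :
    ∀ᵐ s ∂(volume : Measure ℝ), s ∈ Set.Ioc (0:ℝ) 1 → P (ee (s/2)) := by
  have h1 := ae_affine (a := 1/2) (b := 0) (by norm_num) (ae_pull h)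
  refine h1.mono (fun s hs hmem => ?_)
  have e : (1/2 : ℝ) * s + 0 = s/2 := by ring
  rw [e] at hs
  exact hs ⟨by linarith [hmem.1], by linarith [hmem.2]⟩

lemma pull_chain (f g : Lp ℂ 2 haarCircle) (φ : ℝ → ℂ)
    (hφ : ∀ᵐ t ∂(volume : Measure ℝ), t ∈ Set.Ioc (0:ℝ) 1 →
      conj (f (ee t)) * g (ee t) = φ t) :
    (IntervalIntegrable (fun s => φ (s/2) + φ (s/2+1/2)) volume 0 1) ∧
    (∫ z, conj (f z) * g z ∂haarCircle
      = (1/2:ℂ) * ∫ s in (0:ℝ)..1, (φ (s/2) + φ (s/2+1/2))) := by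
  have hint : Integrable (fun z => conj (f z) * g z) haarCircle := by
    simpa only [RCLike.inner_apply'] using L2.integrable_inner (𝕜 := ℂ) f g
  have hiν : Integrable (fun t => conj (f (ee t)) * g (ee t))
      (volume.restrict (Set.Ioc (0:ℝ) 1)) := by
    have h := integrable_pull hint
    exact h
  have hφi : IntegrableOn φ (Set.Ioc 0 1) volume :=
    hiν.congr ((ae_restrict_iff' measurableSet_Ioc).2 hφ)
  have h1 : IntervalIntegrable φ volume 0 (1/2) := by
    rw [intervalIntegrable_iff]
    refine hφi.mono_set ?_
    rw [Set.uIoc_of_le (by norm_num : (0:ℝ) ≤ 1/2)]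
    exact Set.Ioc_subset_Ioc_right (by norm_num)
  have h2 : IntervalIntegrable φ volume (1/2) 1 := by
    rw [intervalIntegrable_iff]
    refine hφi.mono_set ?_
    rw [Set.uIoc_of_le (by norm_num : (1/2:ℝ) ≤ 1)]
    exact Set.Ioc_subset_Ioc_left (by norm_num)
  obtain ⟨hii, heq⟩ := halves φ h1 h2
  refine ⟨hii, ?_⟩
  rw [integral_pull _ hint.aestronglyMeasurable,
    ← intervalIntegral.integral_of_le zero_le_one, ← heq]
  apply intervalIntegral.integral_congr_ae
  refine hφ.mono (fun t ht hmem => ?_)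
  rw [Set.uIoc_of_le zero_le_one] at hmem
  exact ht hmem

lemma inner_ST (m m' : ℂ → ℂ) (c : ℂ)
    (hc : ∀ᵐ z ∂haarCircle, conj (m z) * m' z + conj (m (-z)) * m' (-z) = c)
    (S T : Lp ℂ 2 haarCircle →L[ℂ] Lp ℂ 2 haarCircle)
    (hS : ∀ ξ : Lp ℂ 2 haarCircle, ⇑(S ξ) =ᵐ[haarCircle] fun z => m z * ξ (z ^ 2))
    (hT : ∀ ξ : Lp ℂ 2 haarCircle, ⇑(T ξ) =ᵐ[haarCircle] fun z => m' z * ξ (z ^ 2))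
    (ξ η : Lp ℂ 2 haarCircle) :
    (inner ℂ (S ξ) (T η) : ℂ) = c / 2 * inner ℂ ξ η := by
  set φ : ℝ → ℂ :=
    fun t => conj (m (ee t)) * m' (ee t) * (conj (ξ (ee (2*t))) * η (ee (2*t))) with hφdef
  have hφ : ∀ᵐ t ∂(volume : Measure ℝ), t ∈ Set.Ioc (0:ℝ) 1 →
      conj ((S ξ) (ee t)) * ((T η) (ee t)) = φ t := by
    have hs := ae_pull (hS ξ)
    have ht := ae_pull (hT η)
    filter_upwards [hs, ht] with t h1 h2 hmem
    rw [hφdef]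
    simp only []
    rw [h1 hmem, h2 hmem, ← ee_sq]
    simp only [map_mul]
    ring
  obtain ⟨hii, heq⟩ := pull_chain (S ξ) (T η) φ hφ
  have hinner : (inner ℂ (S ξ) (T η) : ℂ) = ∫ z, conj ((S ξ) z) * ((T η) z) ∂haarCircle := by
    rw [L2.inner_def]
    simp only [RCLike.inner_apply']
  rw [hinner, heq]
  have hptwise : ∀ s : ℝ, φ (s/2) + φ (s/2+1/2)
      = (conj (m (ee (s/2))) * m' (ee (s/2)) + conj (m (-ee (s/2))) * m' (-ee (s/2)))
        * (conj (ξ (ee s)) * η (ee s)) := by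
    intro s
    rw [hφdef]
    simp only []
    rw [show 2 * (s/2) = s by ring, show 2 * (s/2 + 1/2) = s + 1 by ring,
      ee_add_one, ee_add_half]
    ring
  have hbr := ae_half_pull hc
  have hcongr : ∫ s in (0:ℝ)..1, (φ (s/2) + φ (s/2+1/2))
      = ∫ s in (0:ℝ)..1, c * (conj (ξ (ee s)) * η (ee s)) := by
    apply intervalIntegral.integral_congr_ae
    refine hbr.mono (fun s h hmem => ?_)
    rw [Set.uIoc_of_le zero_le_one] at hmem
    rw [hptwise s, h hmem]
  rw [hcongr, intervalIntegral.integral_const_mul]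
  have hfin : ∫ s in (0:ℝ)..1, conj (ξ (ee s)) * η (ee s) = (inner ℂ ξ η : ℂ) := by
    have hint : Integrable (fun z => conj (ξ z) * η z) haarCircle := by
      simpa only [RCLike.inner_apply'] using L2.integrable_inner (𝕜 := ℂ) ξ η
    rw [intervalIntegral.integral_of_le zero_le_one,
      ← integral_pull _ hint.aestronglyMeasurable, L2.inner_def]
    simp only [RCLike.inner_apply']
  rw [hfin]
  ring

lemma nu_finite : IsFiniteMeasure (volume.restrict (Set.Ioc (0:ℝ) 1)) := by
  constructor
  rw [Measure.restrict_apply MeasurableSet.univ]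
  simp

lemma ker_step (m : ℂ → ℂ)
    (S : Lp ℂ 2 haarCircle →L[ℂ] Lp ℂ 2 haarCircle)
    (hS : ∀ ξ : Lp ℂ 2 haarCircle, ⇑(S ξ) =ᵐ[haarCircle] fun z => m z * ξ (z ^ 2))
    (η : Lp ℂ 2 haarCircle) (hker : adjoint S η = 0) :
    ∀ᵐ s ∂(volume : Measure ℝ), s ∈ Set.Ioc (0:ℝ) 1 →
      conj (η (ee (s/2))) * m (ee (s/2))
        + conj (η (ee (s/2+1/2))) * m (ee (s/2+1/2)) = 0 := by
  haveI := nu_finite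
  set g : ℝ → ℂ := fun s => conj (η (ee (s/2))) * m (ee (s/2))
      + conj (η (ee (s/2+1/2))) * m (ee (s/2+1/2)) with hgdef
  have K1 : ∀ ζ : Lp ℂ 2 haarCircle,
      IntervalIntegrable (fun s => g s * ζ (ee s)) volume 0 1 ∧
      ∫ s in (0:ℝ)..1, g s * ζ (ee s) = 0 := by
    intro ζ
    set φ : ℝ → ℂ := fun t => conj (η (ee t)) * (m (ee t) * ζ (ee (2*t))) with hφdef
    have hφ : ∀ᵐ t ∂(volume : Measure ℝ), t ∈ Set.Ioc (0:ℝ) 1 →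
        conj (η (ee t)) * ((S ζ) (ee t)) = φ t := by
      refine (ae_pull (hS ζ)).mono (fun t h hmem => ?_)
      rw [hφdef]
      simp only []
      rw [h hmem, ← ee_sq]
    obtain ⟨hii, heq⟩ := pull_chain η (S ζ) φ hφ
    have hz : ∫ z, conj (η z) * ((S ζ) z) ∂haarCircle = 0 := by
      have h1 : (inner ℂ η (S ζ) : ℂ) = inner ℂ (adjoint S η) ζ :=
        (ContinuousLinearMap.adjoint_inner_left S ζ η).symm
      rw [hker, inner_zero_left] at h1
      rw [← h1, L2.inner_def]
      simp only [RCLike.inner_apply']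
    have hpt : ∀ s : ℝ, φ (s/2) + φ (s/2+1/2) = g s * ζ (ee s) := by
      intro s
      rw [hφdef, hgdef]
      simp only []
      rw [show 2 * (s/2) = s by ring, show 2 * (s/2 + 1/2) = s + 1 by ring, ee_add_one]
      ring
    constructor
    · have : (fun s => φ (s/2) + φ (s/2+1/2)) = fun s => g s * ζ (ee s) := funext hpt
      rwa [this] at hii
    · have h2 : ∫ s in (0:ℝ)..1, g s * ζ (ee s)
          = ∫ s in (0:ℝ)..1, (φ (s/2) + φ (s/2+1/2)) :=
        intervalIntegral.integral_congr (fun x _ => (hpt x).symm)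
      rw [h2]
      rw [hz] at heq
      have h4 : (1/2 : ℂ) * ∫ s in (0:ℝ)..1, (φ (s/2) + φ (s/2+1/2)) = 0 := heq.symm
      rcases mul_eq_zero.mp h4 with h | h
      · norm_num at h
      · exact h
  -- g is integrable on (0,1]
  have ζu : Lp ℂ 2 haarCircle :=
    indicatorConstLp 2 MeasurableSet.univ (measure_ne_top haarCircle _) (1:ℂ)
  have hgint : IntegrableOn g (Set.Ioc 0 1) volume := by
    set ζ := indicatorConstLp (μ := haarCircle) 2 MeasurableSet.univ
      (measure_ne_top haarCircle _) (1:ℂ) with hζ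
    have hcf : ⇑ζ =ᵐ[haarCircle] Set.univ.indicator (fun _ => (1:ℂ)) :=
      indicatorConstLp_coeFn
    have hone : ∀ᵐ t ∂(volume : Measure ℝ), t ∈ Set.Ioc (0:ℝ) 1 → ζ (ee t) = 1 := by
      refine (ae_pull hcf).mono (fun t h hmem => ?_)
      rw [h hmem]
      simp
    have hi := (K1 ζ).1
    rw [intervalIntegrable_iff, Set.uIoc_of_le zero_le_one] at hi
    refine hi.congr ?_
    refine ((ae_restrict_iff' measurableSet_Ioc).2 (hone.mono (fun t h hmem => ?_)))
    show g t * ζ (ee t) = g t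
    rw [h hmem, mul_one]
  -- set integrals of g vanish
  have hsetint : ∀ B : Set ℝ, MeasurableSet B → B ⊆ Set.Ioc 0 1 →
      ∫ s in B, g s ∂volume = 0 := by
    intro B hB hBsub
    set A : Set ℂ := tau ⁻¹' B with hA
    have hAmeas : MeasurableSet A := tau_meas hB
    set ζ := indicatorConstLp (μ := haarCircle) 2 hAmeas
      (measure_ne_top haarCircle _) (1:ℂ) with hζ
    have hind : ∀ᵐ t ∂(volume : Measure ℝ), t ∈ Set.Ioc (0:ℝ) 1 →
        ζ (ee t) = B.indicator (fun _ => (1:ℂ)) t := by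
      have hcf : ⇑ζ =ᵐ[haarCircle] A.indicator (fun _ => (1:ℂ)) :=
        indicatorConstLp_coeFn
      refine (ae_pull hcf).mono (fun t h hmem => ?_)
      rw [h hmem]
      by_cases ht : t ∈ B
      · rw [Set.indicator_of_mem ht, Set.indicator_of_mem]
        rw [hA, Set.mem_preimage, tau_ee hmem]
        exact ht
      · rw [Set.indicator_of_notMem ht, Set.indicator_of_notMem]
        rw [hA, Set.mem_preimage, tau_ee hmem]
        exact ht
    have h0 := (K1 ζ).2
    have h1 : ∫ s in (0:ℝ)..1, g s * B.indicator (fun _ => (1:ℂ)) s = 0 := by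
      rw [← h0]
      apply intervalIntegral.integral_congr_ae
      refine hind.mono (fun s h hmem => ?_)
      rw [Set.uIoc_of_le zero_le_one] at hmem
      rw [h hmem]
    have h2 : (fun s => g s * B.indicator (fun _ => (1:ℂ)) s) = B.indicator g := by
      funext s
      by_cases hs : s ∈ B
      · rw [Set.indicator_of_mem hs, Set.indicator_of_mem hs, mul_one]
      · rw [Set.indicator_of_notMem hs, Set.indicator_of_notMem hs, mul_zero]
    rw [h2, intervalIntegral.integral_of_le zero_le_one,
      setIntegral_indicator hB] at h1
    rwa [Set.inter_eq_self_of_subset_right hBsub] at h1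
  have hg0 : g =ᵐ[volume.restrict (Set.Ioc (0:ℝ) 1)] 0 := by
    apply ae_eq_zero_of_forall_setIntegral_eq_of_sigmaFinite
    · intro s hs _
      rw [IntegrableOn, Measure.restrict_restrict hs]
      exact hgint.mono_set Set.inter_subset_right
    · intro s hs _
      rw [Measure.restrict_restrict hs]
      have := hsetint (s ∩ Set.Ioc 0 1) (hs.inter measurableSet_Ioc)
        Set.inter_subset_right
      exact this
  exact (ae_restrict_iff' measurableSet_Ioc).1 hg0

lemma abs_to_conj {a b : ℂ} (h : ‖a‖ ^ 2 + ‖b‖ ^ 2 = 2) :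
    conj a * a + conj b * b = 2 := by
  have : conj a * a + conj b * b
      = ((‖a‖ ^ 2 + ‖b‖ ^ 2 : ℝ) : ℂ) := by
    rw [mul_comm ((starRingEnd ℂ) a), mul_comm ((starRingEnd ℂ) b),
      Complex.mul_conj, Complex.mul_conj, Complex.sq_norm, Complex.sq_norm]
    push_cast
    ring
  rw [this, h]
  norm_num

lemma eta_zero (m₁ m₂ : ℂ → ℂ)
    (hf₁ : ∀ᵐ z ∂haarCircle, conj (m₁ z) * m₁ z + conj (m₁ (-z)) * m₁ (-z) = 2)
    (hf₂ : ∀ᵐ z ∂haarCircle, conj (m₂ z) * m₂ z + conj (m₂ (-z)) * m₂ (-z) = 2)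
    (horth : ∀ᵐ z ∂haarCircle, conj (m₁ z) * m₂ z + conj (m₁ (-z)) * m₂ (-z) = 0)
    (S₁ S₂ : Lp ℂ 2 haarCircle →L[ℂ] Lp ℂ 2 haarCircle)
    (hS₁ : ∀ ξ : Lp ℂ 2 haarCircle, ⇑(S₁ ξ) =ᵐ[haarCircle] fun z => m₁ z * ξ (z ^ 2))
    (hS₂ : ∀ ξ : Lp ℂ 2 haarCircle, ⇑(S₂ ξ) =ᵐ[haarCircle] fun z => m₂ z * ξ (z ^ 2))
    (η : Lp ℂ 2 haarCircle) (hk1 : adjoint S₁ η = 0) (hk2 : adjoint S₂ η = 0) :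
    η = 0 := by
  have k1 := ker_step m₁ S₁ hS₁ η hk1
  have k2 := ker_step m₂ S₂ hS₂ η hk2
  have b1 := ae_half_pull hf₁
  have b2 := ae_half_pull hf₂
  have b3 := ae_half_pull horth
  have hzero : ∀ᵐ s ∂(volume : Measure ℝ), s ∈ Set.Ioc (0:ℝ) 1 →
      (η (ee (s/2)) = 0 ∧ η (ee (s/2+1/2)) = 0) := by
    filter_upwards [k1, k2, b1, b2, b3] with s hk1' hk2' hb1 hb2 hb3 hmem
    have hminus : -(ee (s/2)) = ee (s/2+1/2) := (ee_add_half (s/2)).symm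
    have hb1' := hb1 hmem; have hb2' := hb2 hmem; have hb3' := hb3 hmem
    rw [hminus] at hb1' hb2' hb3'
    obtain ⟨hx, hy⟩ := solve2 hb1' hb2' hb3' (hk1' hmem) (hk2' hmem)
    constructor
    · rwa [map_eq_zero] at hx
    · rwa [map_eq_zero] at hy
  have hz1 : ∀ᵐ t ∂(volume : Measure ℝ), t ∈ Set.Ioc (0:ℝ) 1 → η (ee t) = 0 := by
    have ha := ae_affine (a := 2) (b := 0) two_ne_zero hzero
    have hb := ae_affine (a := 2) (b := -1) two_ne_zero hzero
    filter_upwards [ha, hb] with t h2t h2t1 hmem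
    by_cases hle : t ≤ 1/2
    · have hm : (2:ℝ)*t + 0 ∈ Set.Ioc (0:ℝ) 1 := ⟨by linarith [hmem.1], by linarith⟩
      have := (h2t hm).1
      rwa [show ((2:ℝ)*t + 0)/2 = t by ring] at this
    · have hm : (2:ℝ)*t + (-1) ∈ Set.Ioc (0:ℝ) 1 := ⟨by linarith, by linarith [hmem.2]⟩
      have := (h2t1 hm).2
      rwa [show ((2:ℝ)*t + (-1))/2 + 1/2 = t by ring] at this
  -- conclude η = 0
  have hmk : ⇑η =ᵐ[haarCircle] (Lp.aestronglyMeasurable η).mk ⇑η :=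
    (Lp.aestronglyMeasurable η).ae_eq_mk
  set F := (Lp.aestronglyMeasurable η).mk ⇑η with hF
  have hmkp := ae_pull hmk
  have hFz : ∀ᵐ t ∂(volume : Measure ℝ), t ∈ Set.Ioc (0:ℝ) 1 → F (ee t) = 0 := by
    filter_upwards [hz1, hmkp] with t h1 h2 hmem
    rw [← h2 hmem]
    exact h1 hmem
  have hms : MeasurableSet {z : ℂ | ¬ F z = 0} := by
    have hsm := (Lp.aestronglyMeasurable η).stronglyMeasurable_mk
    exact (hsm.measurable (measurableSet_singleton (0:ℂ))).compl
  have hμF : haarCircle {z : ℂ | ¬ F z = 0} = 0 := by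
    rw [haarCircle_eq, Measure.map_apply ee_meas hms]
    have h3 : ∀ᵐ t ∂(volume.restrict (Set.Ioc (0:ℝ) 1)), F (ee t) = 0 :=
      (ae_restrict_iff' measurableSet_Ioc).2 hFz
    exact ae_iff.mp h3
  have hη0 : ⇑η =ᵐ[haarCircle] 0 := by
    refine hmk.trans ?_
    rw [Filter.EventuallyEq, ae_iff]
    simpa using hμF
  rw [← Lp.eq_zero_iff_ae_eq_zero] at hη0
  exact hη0

/-- If `(m₁, m₂)` is a filter bank of bounded measurable functions on the circle and
`(Sᵢ ξ)(z) = mᵢ(z) ξ(z²)` on `L²(𝕋, μ)`, then `(S₁, S₂)` is a Cuntz family: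
`S₁*S₁ = S₂*S₂ = I`, `S₁*S₂ = 0`, and `S₁S₁* + S₂S₂* = I`. -/
theorem stmt8 (m₁ m₂ : ℂ → ℂ) (h₁meas : Measurable m₁) (h₂meas : Measurable m₂)
    (h₁bd : ∃ C : ℝ, ∀ᵐ z ∂haarCircle, ‖m₁ z‖ ≤ C)
    (h₂bd : ∃ C : ℝ, ∀ᵐ z ∂haarCircle, ‖m₂ z‖ ≤ C)
    (hfil₁ : ∀ᵐ z ∂haarCircle,
      ‖m₁ z‖ ^ 2 + ‖m₁ (-z)‖ ^ 2 = 2)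
    (hfil₂ : ∀ᵐ z ∂haarCircle,
      ‖m₂ z‖ ^ 2 + ‖m₂ (-z)‖ ^ 2 = 2)
    (horth : ∀ᵐ z ∂haarCircle,
      conj (m₁ z) * m₂ z + conj (m₁ (-z)) * m₂ (-z) = 0)
    (S₁ S₂ : Lp ℂ 2 haarCircle →L[ℂ] Lp ℂ 2 haarCircle)
    (hS₁ : ∀ ξ : Lp ℂ 2 haarCircle, ⇑(S₁ ξ) =ᵐ[haarCircle] fun z => m₁ z * ξ (z ^ 2))
    (hS₂ : ∀ ξ : Lp ℂ 2 haarCircle, ⇑(S₂ ξ) =ᵐ[haarCircle] fun z => m₂ z * ξ (z ^ 2)) :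
    (adjoint S₁).comp S₁ = ContinuousLinearMap.id ℂ (Lp ℂ 2 haarCircle) ∧
    (adjoint S₂).comp S₂ = ContinuousLinearMap.id ℂ (Lp ℂ 2 haarCircle) ∧
    (adjoint S₁).comp S₂ = 0 ∧
    S₁.comp (adjoint S₁) + S₂.comp (adjoint S₂) =
      ContinuousLinearMap.id ℂ (Lp ℂ 2 haarCircle) := by
  have hf1 : ∀ᵐ z ∂haarCircle, conj (m₁ z) * m₁ z + conj (m₁ (-z)) * m₁ (-z) = 2 :=
    hfil₁.mono (fun z h => abs_to_conj h)
  have hf2 : ∀ᵐ z ∂haarCircle, conj (m₂ z) * m₂ z + conj (m₂ (-z)) * m₂ (-z) = 2 :=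
    hfil₂.mono (fun z h => abs_to_conj h)
  have horth' : ∀ᵐ z ∂haarCircle,
      conj (m₂ z) * m₁ z + conj (m₂ (-z)) * m₁ (-z) = 0 := by
    refine horth.mono (fun z h => ?_)
    have h2 := congrArg (starRingEnd ℂ) h
    simp only [map_add, map_mul, RingHomCompTriple.comp_apply, RingHom.id_apply,
      Complex.conj_conj, map_zero] at h2
    rw [← h2]
    ring
  have hP1 : ∀ ξ η : Lp ℂ 2 haarCircle, (inner ℂ (S₁ ξ) (S₁ η) : ℂ) = inner ℂ ξ η := by
    intro ξ η
    rw [inner_ST m₁ m₁ 2 hf1 S₁ S₁ hS₁ hS₁ ξ η]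
    norm_num
  have hP2 : ∀ ξ η : Lp ℂ 2 haarCircle, (inner ℂ (S₂ ξ) (S₂ η) : ℂ) = inner ℂ ξ η := by
    intro ξ η
    rw [inner_ST m₂ m₂ 2 hf2 S₂ S₂ hS₂ hS₂ ξ η]
    norm_num
  have hP12 : ∀ ξ η : Lp ℂ 2 haarCircle, (inner ℂ (S₁ ξ) (S₂ η) : ℂ) = 0 := by
    intro ξ η
    rw [inner_ST m₁ m₂ 0 horth S₁ S₂ hS₁ hS₂ ξ η]
    norm_num
  have hP21 : ∀ ξ η : Lp ℂ 2 haarCircle, (inner ℂ (S₂ ξ) (S₁ η) : ℂ) = 0 := by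
    intro ξ η
    rw [inner_ST m₂ m₁ 0 horth' S₂ S₁ hS₂ hS₁ ξ η]
    norm_num
  have e11 : (adjoint S₁).comp S₁ = ContinuousLinearMap.id ℂ (Lp ℂ 2 haarCircle) := by
    refine ContinuousLinearMap.ext fun ξ => ?_
    apply ext_inner_right ℂ
    intro η
    simp only [ContinuousLinearMap.coe_comp', Function.comp_apply,
      ContinuousLinearMap.coe_id', id_eq]
    rw [ContinuousLinearMap.adjoint_inner_left]
    exact hP1 ξ η
  have e22 : (adjoint S₂).comp S₂ = ContinuousLinearMap.id ℂ (Lp ℂ 2 haarCircle) := by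
    refine ContinuousLinearMap.ext fun ξ => ?_
    apply ext_inner_right ℂ
    intro η
    simp only [ContinuousLinearMap.coe_comp', Function.comp_apply,
      ContinuousLinearMap.coe_id', id_eq]
    rw [ContinuousLinearMap.adjoint_inner_left]
    exact hP2 ξ η
  have e12 : (adjoint S₁).comp S₂ = 0 := by
    refine ContinuousLinearMap.ext fun ξ => ?_
    apply ext_inner_right ℂ
    intro η
    simp only [ContinuousLinearMap.coe_comp', Function.comp_apply,
      ContinuousLinearMap.zero_apply, inner_zero_left]
    rw [ContinuousLinearMap.adjoint_inner_left]
    exact hP21 ξ η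
  have e21 : (adjoint S₂).comp S₁ = 0 := by
    refine ContinuousLinearMap.ext fun ξ => ?_
    apply ext_inner_right ℂ
    intro η
    simp only [ContinuousLinearMap.coe_comp', Function.comp_apply,
      ContinuousLinearMap.zero_apply, inner_zero_left]
    rw [ContinuousLinearMap.adjoint_inner_left]
    exact hP12 ξ η
  have a11 : ∀ x, adjoint S₁ (S₁ x) = x := fun x => by
    have := ContinuousLinearMap.ext_iff.1 e11 x
    simpa using this
  have a22 : ∀ x, adjoint S₂ (S₂ x) = x := fun x => by
    have := ContinuousLinearMap.ext_iff.1 e22 x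
    simpa using this
  have a12 : ∀ x, adjoint S₁ (S₂ x) = 0 := fun x => by
    have := ContinuousLinearMap.ext_iff.1 e12 x
    simpa using this
  have a21 : ∀ x, adjoint S₂ (S₁ x) = 0 := fun x => by
    have := ContinuousLinearMap.ext_iff.1 e21 x
    simpa using this
  refine ⟨e11, e22, e12, ?_⟩
  refine ContinuousLinearMap.ext fun ξ => ?_
  simp only [ContinuousLinearMap.add_apply, ContinuousLinearMap.coe_comp',
    Function.comp_apply, ContinuousLinearMap.coe_id', id_eq]
  set η : Lp ℂ 2 haarCircle := ξ - S₁ (adjoint S₁ ξ) - S₂ (adjoint S₂ ξ) with hη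
  have hker1 : adjoint S₁ η = 0 := by
    rw [hη]
    simp only [map_sub, a11, a12]
    abel
  have hker2 : adjoint S₂ η = 0 := by
    rw [hη]
    simp only [map_sub, a22, a21]
    abel
  have hzero := eta_zero m₁ m₂ hf1 hf2 horth S₁ S₂ hS₁ hS₂ η hker1 hker2
  rw [hη, sub_sub, sub_eq_zero] at hzero
  exact hzero.symm
end

section
/- Let 𝕋 = {z ∈ ℂ : |z| = 1} with normalized Haar probability measure μ, and let (m₁, m₂) be a filter bank of bounded measurable functions on 𝕋, with associated operators (Sᵢξ)(z) = mᵢ(z)·ξ(z²) on L²(𝕋, μ). For f ∈ L^∞(𝕋, μ) let M_f denote the multiplication operator (M_f ξ)(z) = f(z)ξ(z), and let β(f)(z) = f(z²). Then for every f ∈ L^∞(𝕋, μ): (1) M_{β(f)}·Sᵢ = Sᵢ·M_f for i = 1, 2; and (2) M_{β(f)} = S₁ M_f S₁* + S₂ M_f S₂*. -/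
open MeasureTheory ComplexConjugate ContinuousLinearMap

namespace Stmt9Aux

open Complex Set

noncomputable def φ : AddCircle (1 : ℝ) → ℂ := fun x => (AddCircle.toCircle x : ℂ)

lemma φ_mk (t : ℝ) :
    φ (t : AddCircle (1 : ℝ)) = Complex.exp (2 * Real.pi * Complex.I * t) := by
  show ((AddCircle.toCircle ((t : ℝ) : AddCircle (1:ℝ))) : ℂ) = _
  rw [AddCircle.toCircle_apply_mk, Circle.coe_exp]
  congr 1
  push_cast
  ring

lemma continuous_φ : Continuous φ :=
  continuous_subtype_val.comp AddCircle.continuous_toCircle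

lemma injective_φ : Function.Injective φ :=
  fun x y h => AddCircle.injective_toCircle one_ne_zero (Subtype.ext h)

lemma measurableEmbedding_φ : MeasurableEmbedding φ :=
  (continuous_φ.isClosedEmbedding injective_φ).measurableEmbedding

lemma φ_ne_zero (x : AddCircle (1 : ℝ)) : φ x ≠ 0 :=
  Circle.coe_ne_zero _

lemma φ_add (x y : AddCircle (1 : ℝ)) : φ (x + y) = φ x * φ y := by
  show ((AddCircle.toCircle (x + y)) : ℂ) = _
  rw [AddCircle.toCircle_add]
  rfl

lemma haar_eq_map :
    haarCircle = Measure.map φ (volume : Measure (AddCircle (1 : ℝ))) := by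
  have h2 : Measure.map ((↑) : ℝ → AddCircle (1:ℝ))
      (volume.restrict (Ioc (0:ℝ) (0 + 1))) = volume :=
    (AddCircle.measurePreserving_mk 1 0).map_eq
  rw [zero_add] at h2
  rw [haarCircle, ← h2,
    Measure.map_map measurableEmbedding_φ.measurable
      (AddCircle.measurePreserving_mk 1 0).measurable]
  congr 1
  funext t
  exact (φ_mk t).symm

instance : IsProbabilityMeasure haarCircle := by
  rw [haar_eq_map]
  have : IsProbabilityMeasure (volume : Measure (AddCircle (1:ℝ))) :=
    ⟨by rw [AddCircle.measure_univ]; norm_num⟩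
  exact Measure.isProbabilityMeasure_map measurableEmbedding_φ.measurable.aemeasurable

lemma mp_sq : MeasurePreserving (fun z : ℂ => z ^ 2) haarCircle haarCircle := by
  have hm : Measurable fun z : ℂ => z ^ 2 := measurable_id.pow_const 2
  refine ⟨hm, ?_⟩
  have h2 : MeasurePreserving (fun y : AddCircle (1:ℝ) => (2:ℤ) • y) volume volume :=
    Measure.measurePreserving_zsmul volume (by norm_num)
  have hcomp : (fun z : ℂ => z ^ 2) ∘ φ = φ ∘ fun y : AddCircle (1:ℝ) => (2:ℤ) • y := by
    funext y
    simp only [Function.comp_apply]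
    rw [two_zsmul, φ_add, sq]
  rw [haar_eq_map, Measure.map_map hm measurableEmbedding_φ.measurable, hcomp,
    ← Measure.map_map measurableEmbedding_φ.measurable h2.measurable, h2.map_eq]

lemma mp_neg : MeasurePreserving (fun z : ℂ => -z) haarCircle haarCircle := by
  have hm : Measurable fun z : ℂ => -z := measurable_neg
  refine ⟨hm, ?_⟩
  have h2 : MeasurePreserving (fun y : AddCircle (1:ℝ) => ((1/2 : ℝ) : AddCircle (1:ℝ)) + y)
      volume volume := measurePreserving_add_left volume _
  have hhalf : φ (((1/2 : ℝ) : AddCircle (1:ℝ))) = -1 := by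
    rw [φ_mk]
    rw [show 2 * (Real.pi : ℂ) * Complex.I * ((1/2 : ℝ) : ℂ) = Real.pi * Complex.I by
      push_cast; ring]
    exact Complex.exp_pi_mul_I
  have hcomp : (fun z : ℂ => -z) ∘ φ
      = φ ∘ fun y : AddCircle (1:ℝ) => ((1/2 : ℝ) : AddCircle (1:ℝ)) + y := by
    funext y
    simp only [Function.comp_apply]
    rw [φ_add, hhalf]
    ring
  rw [haar_eq_map, Measure.map_map hm measurableEmbedding_φ.measurable, hcomp,
    ← Measure.map_map measurableEmbedding_φ.measurable h2.measurable, h2.map_eq]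

lemma ae_ne_zero : ∀ᵐ z ∂haarCircle, z ≠ 0 := by
  rw [haar_eq_map, measurableEmbedding_φ.ae_map_iff]
  exact Filter.Eventually.of_forall φ_ne_zero

/-- transfer an a.e. property along a measure-preserving map -/
lemma ae_comp {T : ℂ → ℂ} (hT : MeasurePreserving T haarCircle haarCircle)
    {p : ℂ → Prop} (hp : ∀ᵐ z ∂haarCircle, p z) : ∀ᵐ z ∂haarCircle, p (T z) := by
  refine ae_of_ae_map hT.measurable.aemeasurable ?_
  rwa [hT.map_eq]

/-- a 2×2 matrix with orthonormal rows (scaled by √2) has orthonormal columns -/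
lemma col_identities {a b c d : ℂ}
    (h1 : ‖a‖ ^ 2 + ‖b‖ ^ 2 = 2)
    (h2 : ‖c‖ ^ 2 + ‖d‖ ^ 2 = 2)
    (h3 : conj a * c + conj b * d = 0) :
    conj a * a + conj c * c = 2 ∧ a * conj b + c * conj d = 0 := by
  have hac : conj a * c = -(conj b * d) := by linear_combination h3
  have habs : ‖a‖ * ‖c‖ = ‖b‖ * ‖d‖ := by
    have := congrArg (‖·‖) hac
    simpa [map_mul, Complex.norm_conj] using this
  have hxu : ‖a‖ ^ 2 + ‖c‖ ^ 2 = 2 := by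
    have h5 : ‖a‖ ^ 2 * ‖c‖ ^ 2
        = ‖b‖ ^ 2 * ‖d‖ ^ 2 := by
      rw [← mul_pow, habs, mul_pow]
    nlinarith [h5, h1, h2]
  constructor
  · rw [mul_comm (conj a) a, mul_comm (conj c) c, Complex.mul_conj, Complex.mul_conj,
      ← Complex.sq_norm a, ← Complex.sq_norm c]
    exact_mod_cast hxu
  · have hxv : ‖a‖ ^ 2 = ‖d‖ ^ 2 := by nlinarith [hxu, h2]
    by_cases ha : a = 0
    · have hd : d = 0 := by
        have : ‖d‖ ^ 2 = 0 := by rw [← hxv, ha]; simp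
        have := pow_eq_zero_iff (n := 2) (by norm_num) |>.mp this
        exact norm_eq_zero.mp this
      rw [ha, hd]
      simp
    · have key : conj a * (a * conj b + c * conj d) = 0 := by
        have e1 : conj a * (a * conj b + c * conj d)
            = (a * conj a) * conj b + (conj a * c) * conj d := by ring
        rw [e1, hac, Complex.mul_conj]
        have e2 : -(conj b * d) * conj d = -(conj b * (d * conj d)) := by ring
        rw [e2, Complex.mul_conj]
        have e3 : (Complex.normSq a : ℂ) = (Complex.normSq d : ℂ) := by
          norm_cast
          rw [← Complex.sq_norm, ← Complex.sq_norm]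
          exact hxv
        rw [e3]
        ring
      have hca : conj a ≠ 0 := by
        simpa [map_eq_zero] using ha
      exact (mul_eq_zero.mp key).resolve_left hca

lemma Lp_ext {f g : Lp ℂ 2 haarCircle} (h : ⇑f =ᵐ[haarCircle] ⇑g) : f = g :=
  Subtype.eq (MeasureTheory.AEEqFun.ext h)

/-- The inner-product computation underlying the Cuntz relations `Sᵢ* Sⱼ = δᵢⱼ`. -/
lemma inner_formula (p q : ℂ → ℂ) (hp : Measurable p) (hq : Measurable q)
    {Cp Cq : ℝ} (hpb : ∀ᵐ z ∂haarCircle, ‖p z‖ ≤ Cp)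
    (hqb : ∀ᵐ z ∂haarCircle, ‖q z‖ ≤ Cq)
    (c : ℂ)
    (hc : ∀ᵐ z ∂haarCircle, conj (p z) * q z + conj (p (-z)) * q (-z) = 2 * c)
    (Sp Sq : Lp ℂ 2 haarCircle →L[ℂ] Lp ℂ 2 haarCircle)
    (hSp : ∀ ξ : Lp ℂ 2 haarCircle, ⇑(Sp ξ) =ᵐ[haarCircle] fun z => p z * ξ (z ^ 2))
    (hSq : ∀ ξ : Lp ℂ 2 haarCircle, ⇑(Sq ξ) =ᵐ[haarCircle] fun z => q z * ξ (z ^ 2))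
    (v ξ : Lp ℂ 2 haarCircle) :
    (inner ℂ (Sp v) (Sq ξ) : ℂ) = c * inner ℂ v ξ := by
  have hvm : Measurable (⇑v) := (Lp.stronglyMeasurable v).measurable
  have hξm : Measurable (⇑ξ) := (Lp.stronglyMeasurable ξ).measurable
  set H : ℂ → ℂ := fun w => conj (v w) * ξ w with hH
  have hHmeas : Measurable H := (Complex.continuous_conj.measurable.comp hvm).mul hξm
  -- H is integrable (product of two L² functions)
  have hH1 : MemLp H 1 haarCircle := by
    have hconj : MemLp (fun w => conj (v w)) 2 haarCircle := by
      refine MemLp.of_le_mul (Lp.memLp v)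
        (Complex.continuous_conj.measurable.comp hvm).aestronglyMeasurable
        (Filter.Eventually.of_forall fun w => ?_) (c := 1)
      simp [RCLike.norm_conj]
    have := (Lp.memLp ξ).smul hconj
      (p := 2) (q := 2) (r := 1)
    refine this.congr_norm ?_ ?_
    · exact hHmeas.aestronglyMeasurable
    · exact Filter.Eventually.of_forall fun w => by
        simp [H, Pi.smul_apply, smul_eq_mul, norm_mul]
  have hHsqMem : MemLp (fun z : ℂ => H (z ^ 2)) 1 haarCircle := by
    have h1 : MemLp H 1 (Measure.map (fun z : ℂ => z ^ 2) haarCircle) := by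
      rw [mp_sq.map_eq]; exact hH1
    have := (memLp_map_measure_iff
      (by rw [mp_sq.map_eq]; exact hH1.1) mp_sq.measurable.aemeasurable).mp h1
    exact this
  set k : ℂ → ℂ := fun z => conj (p z) * q z with hk
  have hkmeas : Measurable k := (Complex.continuous_conj.measurable.comp hp).mul hq
  set Φ : ℂ → ℂ := fun z => k z * H (z ^ 2) with hΦ
  have hΦmeas : Measurable Φ := hkmeas.mul (hHmeas.comp (measurable_id.pow_const 2))
  have hΦint : Integrable Φ haarCircle := by
    have hktop : MemLp k ⊤ haarCircle := by
      refine memLp_top_of_bound hkmeas.aestronglyMeasurable (Cp * Cq) ?_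
      filter_upwards [hpb, hqb] with z h1 h2
      rw [hk]
      simp only [norm_mul, Complex.norm_conj]
      exact mul_le_mul h1 h2 (norm_nonneg _) (le_trans (norm_nonneg _) h1)
    have := hHsqMem.smul hktop (p := ⊤) (q := 1) (r := 1)
    rw [← memLp_one_iff_integrable]
    refine this.congr_norm hΦmeas.aestronglyMeasurable ?_
    exact Filter.Eventually.of_forall fun w => by
      simp [Φ, Pi.smul_apply, smul_eq_mul, norm_mul]
  -- the inner product equals ∫ Φ
  have e1 : (inner ℂ (Sp v) (Sq ξ) : ℂ) = ∫ z, Φ z ∂haarCircle := by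
    rw [MeasureTheory.L2.inner_def]
    refine integral_congr_ae ?_
    filter_upwards [hSp v, hSq ξ] with z h1 h2
    rw [RCLike.inner_apply, h1, h2]
    simp only [Φ, k, H, map_mul]
    ring
  have hΦneg : Integrable (fun z => Φ (-z)) haarCircle :=
    (mp_neg.integrable_comp hΦmeas.aestronglyMeasurable).mpr hΦint
  have e2 : ∫ z, Φ z ∂haarCircle = ∫ z, Φ (-z) ∂haarCircle := by
    conv_lhs => rw [← mp_neg.map_eq]
    exact integral_map mp_neg.measurable.aemeasurable
      (by rw [mp_neg.map_eq]; exact hΦmeas.aestronglyMeasurable)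
  have e3 : (2 : ℂ) * ∫ z, Φ z ∂haarCircle
      = (2 : ℂ) * (c * ∫ z, H (z ^ 2) ∂haarCircle) := by
    have hsum : ∫ z, (Φ z + Φ (-z)) ∂haarCircle
        = ∫ z, Φ z ∂haarCircle + ∫ z, Φ (-z) ∂haarCircle :=
      integral_add hΦint hΦneg
    have hptw : (fun z => Φ z + Φ (-z)) =ᵐ[haarCircle] fun z => 2 * c * H (z ^ 2) := by
      filter_upwards [hc] with z hz
      have : Φ z + Φ (-z) = (k z + k (-z)) * H (z ^ 2) := by
        simp only [Φ, neg_sq]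
        ring
      rw [this, hz]
    calc (2 : ℂ) * ∫ z, Φ z ∂haarCircle
        = ∫ z, Φ z ∂haarCircle + ∫ z, Φ (-z) ∂haarCircle := by rw [← e2]; ring
      _ = ∫ z, (Φ z + Φ (-z)) ∂haarCircle := hsum.symm
      _ = ∫ z, 2 * c * H (z ^ 2) ∂haarCircle := integral_congr_ae hptw
      _ = 2 * c * ∫ z, H (z ^ 2) ∂haarCircle := integral_const_mul _ _
      _ = (2 : ℂ) * (c * ∫ z, H (z ^ 2) ∂haarCircle) := by ring
  have e4 : ∫ z, H (z ^ 2) ∂haarCircle = ∫ w, H w ∂haarCircle := by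
    conv_rhs => rw [← mp_sq.map_eq]
    exact (integral_map mp_sq.measurable.aemeasurable
      (by rw [mp_sq.map_eq]; exact hHmeas.aestronglyMeasurable)).symm
  have e5 : (inner ℂ v ξ : ℂ) = ∫ w, H w ∂haarCircle := by
    rw [MeasureTheory.L2.inner_def]
    refine integral_congr_ae (Filter.Eventually.of_forall fun w => ?_)
    show (inner ℂ (⇑v w) (⇑ξ w) : ℂ) = H w
    rw [RCLike.inner_apply']
  have := mul_left_cancel₀ (two_ne_zero (α := ℂ)) e3
  rw [e1, this, e4, ← e5]

end Stmt9Aux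

open Stmt9Aux

/-- For a filter bank `(m₁, m₂)` with Cuntz isometries `(Sᵢ ξ)(z) = mᵢ(z) ξ(z²)`, and
for every `f ∈ L^∞(𝕋, μ)` with multiplication operator `M_f` and `β(f)(z) = f(z²)`:
(1) `M_{β(f)} Sᵢ = Sᵢ M_f` for `i = 1, 2`; and (2) `M_{β(f)} = S₁ M_f S₁* + S₂ M_f S₂*`. -/
theorem stmt9 (m₁ m₂ : ℂ → ℂ) (h₁meas : Measurable m₁) (h₂meas : Measurable m₂)
    (h₁bd : ∃ C : ℝ, ∀ᵐ z ∂haarCircle, ‖m₁ z‖ ≤ C)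
    (h₂bd : ∃ C : ℝ, ∀ᵐ z ∂haarCircle, ‖m₂ z‖ ≤ C)
    (hfil₁ : ∀ᵐ z ∂haarCircle,
      ‖m₁ z‖ ^ 2 + ‖m₁ (-z)‖ ^ 2 = 2)
    (hfil₂ : ∀ᵐ z ∂haarCircle,
      ‖m₂ z‖ ^ 2 + ‖m₂ (-z)‖ ^ 2 = 2)
    (horth : ∀ᵐ z ∂haarCircle,
      conj (m₁ z) * m₂ z + conj (m₁ (-z)) * m₂ (-z) = 0)
    (S₁ S₂ : Lp ℂ 2 haarCircle →L[ℂ] Lp ℂ 2 haarCircle)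
    (hS₁ : ∀ ξ : Lp ℂ 2 haarCircle, ⇑(S₁ ξ) =ᵐ[haarCircle] fun z => m₁ z * ξ (z ^ 2))
    (hS₂ : ∀ ξ : Lp ℂ 2 haarCircle, ⇑(S₂ ξ) =ᵐ[haarCircle] fun z => m₂ z * ξ (z ^ 2))
    (f : ℂ → ℂ) (hfmeas : Measurable f)
    (hfbd : ∃ C : ℝ, ∀ᵐ z ∂haarCircle, ‖f z‖ ≤ C)
    (Mf Mβf : Lp ℂ 2 haarCircle →L[ℂ] Lp ℂ 2 haarCircle)
    (hMf : ∀ ξ : Lp ℂ 2 haarCircle, ⇑(Mf ξ) =ᵐ[haarCircle] fun z => f z * ξ z)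
    (hMβf : ∀ ξ : Lp ℂ 2 haarCircle, ⇑(Mβf ξ) =ᵐ[haarCircle] fun z => f (z ^ 2) * ξ z) :
    Mβf.comp S₁ = S₁.comp Mf ∧
    Mβf.comp S₂ = S₂.comp Mf ∧
    Mβf = (S₁.comp Mf).comp (adjoint S₁) + (S₂.comp Mf).comp (adjoint S₂) := by
  obtain ⟨C₁, h₁bd⟩ := h₁bd
  obtain ⟨C₂, h₂bd⟩ := h₂bd
  -- Part (1), for a general filter `m` and operator `S`.
  have part1 : ∀ (m : ℂ → ℂ) (S : Lp ℂ 2 haarCircle →L[ℂ] Lp ℂ 2 haarCircle),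
      (∀ ξ : Lp ℂ 2 haarCircle, ⇑(S ξ) =ᵐ[haarCircle] fun z => m z * ξ (z ^ 2)) →
      Mβf.comp S = S.comp Mf := by
    intro m S hS
    refine ContinuousLinearMap.ext fun ξ => ?_
    refine Lp_ext ?_
    have hMfc : (fun z : ℂ => (Mf ξ) (z ^ 2)) =ᵐ[haarCircle]
        fun z : ℂ => f (z ^ 2) * ξ (z ^ 2) := by
      have h2 : (⇑(Mf ξ)) ∘ (fun z : ℂ => z ^ 2) =ᵐ[haarCircle]
          (fun z => f z * ξ z) ∘ (fun z : ℂ => z ^ 2) :=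
        MeasureTheory.ae_eq_comp mp_sq.measurable.aemeasurable
          (by rw [mp_sq.map_eq]; exact hMf ξ)
      exact h2
    have A : ⇑(Mβf (S ξ)) =ᵐ[haarCircle]
        fun z => m z * (f (z ^ 2) * ξ (z ^ 2)) := by
      filter_upwards [hMβf (S ξ), hS ξ] with z h1 h2
      rw [h1, h2]; ring
    have B : ⇑(S (Mf ξ)) =ᵐ[haarCircle]
        fun z => m z * (f (z ^ 2) * ξ (z ^ 2)) := by
      filter_upwards [hS (Mf ξ), hMfc] with z h1 h2
      rw [h1, h2]
    exact A.trans B.symm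
  -- the conjugation relations for the inner products
  have hcc11 : ∀ᵐ z ∂haarCircle,
      conj (m₁ z) * m₁ z + conj (m₁ (-z)) * m₁ (-z) = 2 * 1 := by
    filter_upwards [hfil₁] with z hz
    rw [mul_comm (conj (m₁ z)), mul_comm (conj (m₁ (-z))), Complex.mul_conj, Complex.mul_conj,
      ← Complex.sq_norm, ← Complex.sq_norm]
    rw [mul_one]
    exact_mod_cast hz
  have hcc22 : ∀ᵐ z ∂haarCircle,
      conj (m₂ z) * m₂ z + conj (m₂ (-z)) * m₂ (-z) = 2 * 1 := by
    filter_upwards [hfil₂] with z hz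
    rw [mul_comm (conj (m₂ z)), mul_comm (conj (m₂ (-z))), Complex.mul_conj, Complex.mul_conj,
      ← Complex.sq_norm, ← Complex.sq_norm]
    rw [mul_one]
    exact_mod_cast hz
  have hcc12 : ∀ᵐ z ∂haarCircle,
      conj (m₁ z) * m₂ z + conj (m₁ (-z)) * m₂ (-z) = 2 * 0 := by
    filter_upwards [horth] with z hz
    rw [mul_zero]; exact hz
  have hcc21 : ∀ᵐ z ∂haarCircle,
      conj (m₂ z) * m₁ z + conj (m₂ (-z)) * m₁ (-z) = 2 * 0 := by
    filter_upwards [horth] with z hz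
    have h' := congrArg (starRingEnd ℂ) hz
    simp only [map_add, map_mul, Complex.conj_conj, map_zero] at h'
    rw [mul_zero]
    linear_combination h'
  -- Sᵢ* Sⱼ = δᵢⱼ
  have hadj : ∀ (p q : ℂ → ℂ), Measurable p → Measurable q →
      ∀ {Cp Cq : ℝ}, (∀ᵐ z ∂haarCircle, ‖p z‖ ≤ Cp) →
      (∀ᵐ z ∂haarCircle, ‖q z‖ ≤ Cq) →
      ∀ (c : ℂ), (∀ᵐ z ∂haarCircle, conj (p z) * q z + conj (p (-z)) * q (-z) = 2 * c) →
      ∀ (Sp Sq : Lp ℂ 2 haarCircle →L[ℂ] Lp ℂ 2 haarCircle),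
      (∀ ξ : Lp ℂ 2 haarCircle, ⇑(Sp ξ) =ᵐ[haarCircle] fun z => p z * ξ (z ^ 2)) →
      (∀ ξ : Lp ℂ 2 haarCircle, ⇑(Sq ξ) =ᵐ[haarCircle] fun z => q z * ξ (z ^ 2)) →
      ∀ ξ : Lp ℂ 2 haarCircle, adjoint Sp (Sq ξ) = c • ξ := by
    intro p q hp hq Cp Cq hpb hqb c hc Sp Sq hSp hSq ξ
    refine ext_inner_left ℂ fun w => ?_
    rw [adjoint_inner_right, inner_smul_right]
    exact inner_formula p q hp hq hpb hqb c hc Sp Sq hSp hSq w ξ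
  have h11 := hadj m₁ m₁ h₁meas h₁meas h₁bd h₁bd 1 hcc11 S₁ S₁ hS₁ hS₁
  have h12 := hadj m₁ m₂ h₁meas h₂meas h₁bd h₂bd 0 hcc12 S₁ S₂ hS₁ hS₂
  have h21 := hadj m₂ m₁ h₂meas h₁meas h₂bd h₁bd 0 hcc21 S₂ S₁ hS₂ hS₁
  have h22 := hadj m₂ m₂ h₂meas h₂meas h₂bd h₂bd 1 hcc22 S₂ S₂ hS₂ hS₂
  -- Decomposition: every η is S₁ G₁ + S₂ G₂
  have hdec : ∀ η : Lp ℂ 2 haarCircle,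
      ∃ G₁ G₂ : Lp ℂ 2 haarCircle, η = S₁ G₁ + S₂ G₂ := by
    intro η
    have hηm : Measurable (⇑η) := (Lp.stronglyMeasurable η).measurable
    set V : ℂ → ℂ := ⇑η with hV
    set F : (ℂ → ℂ) → ℂ → ℂ :=
      fun m z => (conj (m z) * V z + conj (m (-z)) * V (-z)) / 2 with hF
    set σ : ℂ → ℂ := fun z => Complex.exp (Complex.log z / 2) with hσ
    have hσmeas : Measurable σ := (Complex.measurable_log.div_const 2).cexp
    have hFmeas : ∀ (m : ℂ → ℂ), Measurable m → Measurable (F m) := by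
      intro m hm
      exact (((Complex.continuous_conj.measurable.comp hm).mul hηm).add
        ((Complex.continuous_conj.measurable.comp (hm.comp measurable_neg)).mul
          (hηm.comp measurable_neg))).div_const 2
    have hFeven : ∀ (m : ℂ → ℂ) (z : ℂ), F m (-z) = F m z := by
      intro m z
      simp only [F, neg_neg]
      ring
    have hgsq : ∀ (m : ℂ → ℂ) (z : ℂ), z ≠ 0 → (F m ∘ σ) (z ^ 2) = F m z := by
      intro m z hz
      have hz2 : z ^ 2 ≠ 0 := pow_ne_zero 2 hz
      have hsq : σ (z ^ 2) ^ 2 = z ^ 2 := by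
        rw [hσ]
        rw [← Complex.exp_nat_mul]
        rw [show (2 : ℕ) * (Complex.log (z ^ 2) / 2) = Complex.log (z ^ 2) by push_cast; ring]
        exact Complex.exp_log hz2
      have : (σ (z ^ 2) - z) * (σ (z ^ 2) + z) = 0 := by linear_combination hsq
      rcases mul_eq_zero.mp this with h | h
      · have : σ (z ^ 2) = z := by linear_combination h
        simp only [Function.comp_apply, this]
      · have : σ (z ^ 2) = -z := by linear_combination h
        simp only [Function.comp_apply, this, hFeven]
    -- membership in L²
    have hFmem : ∀ (m : ℂ → ℂ), Measurable m →
        (∀ᵐ z ∂haarCircle, ‖m z‖ ≤ C₁ + C₂) → MemLp (F m) 2 haarCircle := by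
      intro m hm hmb
      have hmbneg : ∀ᵐ z ∂haarCircle, ‖m (-z)‖ ≤ C₁ + C₂ :=
        ae_comp mp_neg hmb
      have hVneg : MemLp (fun z => V (-z)) 2 haarCircle := by
        have h1 : MemLp V 2 (Measure.map (fun z : ℂ => -z) haarCircle) := by
          rw [mp_neg.map_eq]; exact Lp.memLp η
        exact (memLp_map_measure_iff
          (by rw [mp_neg.map_eq]; exact (Lp.memLp η).1)
          mp_neg.measurable.aemeasurable).mp h1
      have t1 : MemLp (fun z => conj (m z) * V z) 2 haarCircle := by
        refine MemLp.of_le_mul (Lp.memLp η)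
          ((Complex.continuous_conj.measurable.comp hm).mul hηm).aestronglyMeasurable
          ?_ (c := C₁ + C₂)
        filter_upwards [hmb] with z hz
        simp only [norm_mul, Complex.norm_conj]
        exact mul_le_mul_of_nonneg_right hz (norm_nonneg _)
      have t2 : MemLp (fun z => conj (m (-z)) * V (-z)) 2 haarCircle := by
        refine MemLp.of_le_mul hVneg
          ((Complex.continuous_conj.measurable.comp (hm.comp measurable_neg)).mul
            (hηm.comp measurable_neg)).aestronglyMeasurable
          ?_ (c := C₁ + C₂)
        filter_upwards [hmbneg] with z hz
        simp only [norm_mul, Complex.norm_conj]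
        exact mul_le_mul_of_nonneg_right hz (norm_nonneg _)
      refine ((t1.add t2).const_mul ((2 : ℂ)⁻¹)).ae_eq
        (Filter.Eventually.of_forall fun z => ?_)
      show (2 : ℂ)⁻¹ * ((fun z => conj (m z) * V z) + fun z => conj (m (-z)) * V (-z)) z
        = F m z
      simp only [Pi.add_apply, F]
      ring
    have hgmem : ∀ (m : ℂ → ℂ), Measurable m →
        (∀ᵐ z ∂haarCircle, ‖m z‖ ≤ C₁ + C₂) →
        MemLp (F m ∘ σ) 2 haarCircle := by
      intro m hm hmb
      have hmeas : Measurable (F m ∘ σ) := (hFmeas m hm).comp hσmeas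
      have hcomp : (F m ∘ σ) ∘ (fun z : ℂ => z ^ 2) =ᵐ[haarCircle] F m := by
        filter_upwards [ae_ne_zero] with z hz
        exact hgsq m z hz
      have h2 : MemLp ((F m ∘ σ) ∘ (fun z : ℂ => z ^ 2)) 2 haarCircle :=
        (hFmem m hm hmb).ae_eq hcomp.symm
      have h3 : MemLp (F m ∘ σ) 2 (Measure.map (fun z : ℂ => z ^ 2) haarCircle) :=
        (memLp_map_measure_iff
          (by rw [mp_sq.map_eq]; exact hmeas.aestronglyMeasurable)
          mp_sq.measurable.aemeasurable).mpr h2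
      rwa [mp_sq.map_eq] at h3
    have h₁bd' : ∀ᵐ z ∂haarCircle, ‖m₁ z‖ ≤ C₁ + C₂ := by
      filter_upwards [h₁bd, h₂bd] with z hz hz2
      have : (0:ℝ) ≤ C₂ := le_trans (norm_nonneg _) hz2
      linarith
    have h₂bd' : ∀ᵐ z ∂haarCircle, ‖m₂ z‖ ≤ C₁ + C₂ := by
      filter_upwards [h₁bd, h₂bd] with z hz hz2
      have : (0:ℝ) ≤ C₁ := le_trans (norm_nonneg _) hz
      linarith
    set G₁ : Lp ℂ 2 haarCircle := (hgmem m₁ h₁meas h₁bd').toLp (F m₁ ∘ σ) with hG₁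
    set G₂ : Lp ℂ 2 haarCircle := (hgmem m₂ h₂meas h₂bd').toLp (F m₂ ∘ σ) with hG₂
    refine ⟨G₁, G₂, Lp_ext ?_⟩
    -- column identities, a.e.
    have hcol : ∀ᵐ z ∂haarCircle,
        conj (m₁ z) * m₁ z + conj (m₂ z) * m₂ z = 2 ∧
        m₁ z * conj (m₁ (-z)) + m₂ z * conj (m₂ (-z)) = 0 := by
      filter_upwards [hfil₁, hfil₂, horth] with z h1 h2 h3
      exact col_identities h1 h2 h3
    have hGc : ∀ (m : ℂ → ℂ) (hm : Measurable m)
        (hmb : ∀ᵐ z ∂haarCircle, ‖m z‖ ≤ C₁ + C₂),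
        (fun z : ℂ => ((hgmem m hm hmb).toLp (F m ∘ σ)) (z ^ 2)) =ᵐ[haarCircle]
        fun z : ℂ => F m z := by
      intro m hm hmb
      have h1 : ⇑((hgmem m hm hmb).toLp (F m ∘ σ)) =ᵐ[haarCircle] F m ∘ σ :=
        MemLp.coeFn_toLp _
      have h2 : (⇑((hgmem m hm hmb).toLp (F m ∘ σ))) ∘ (fun z : ℂ => z ^ 2)
          =ᵐ[haarCircle] (F m ∘ σ) ∘ (fun z : ℂ => z ^ 2) :=
        MeasureTheory.ae_eq_comp mp_sq.measurable.aemeasurable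
          (by rw [mp_sq.map_eq]; exact h1)
      have h3 : (F m ∘ σ) ∘ (fun z : ℂ => z ^ 2) =ᵐ[haarCircle] F m := by
        filter_upwards [ae_ne_zero] with z hz
        exact hgsq m z hz
      exact h2.trans h3
    calc ⇑η =ᵐ[haarCircle] fun z => m₁ z * F m₁ z + m₂ z * F m₂ z := by
          filter_upwards [hcol] with z hz
          obtain ⟨hc1, hc2⟩ := hz
          show V z = m₁ z * F m₁ z + m₂ z * F m₂ z
          simp only [F]
          linear_combination (-(V z) / 2) * hc1 + (-(V (-z)) / 2) * hc2
      _ =ᵐ[haarCircle] fun z => m₁ z * G₁ (z ^ 2) + m₂ z * G₂ (z ^ 2) := by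
          filter_upwards [hGc m₁ h₁meas h₁bd', hGc m₂ h₂meas h₂bd'] with z h1 h2
          rw [hG₁, hG₂, h1, h2]
      _ =ᵐ[haarCircle] ⇑(S₁ G₁ + S₂ G₂) := by
          have := Lp.coeFn_add (S₁ G₁) (S₂ G₂)
          filter_upwards [this, hS₁ G₁, hS₂ G₂] with z h1 h2 h3
          rw [h1]
          show m₁ z * G₁ (z ^ 2) + m₂ z * G₂ (z ^ 2) = (S₁ G₁) z + (S₂ G₂) z
          rw [h2, h3]
  -- assemble
  refine ⟨part1 m₁ S₁ hS₁, part1 m₂ S₂ hS₂, ?_⟩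
  refine ContinuousLinearMap.ext fun η => ?_
  obtain ⟨G₁, G₂, hη⟩ := hdec η
  have hA1 : adjoint S₁ η = G₁ := by
    rw [hη, map_add, h11 G₁, h12 G₂, one_smul, zero_smul, add_zero]
  have hA2 : adjoint S₂ η = G₂ := by
    rw [hη, map_add, h21 G₁, h22 G₂, one_smul, zero_smul, zero_add]
  have e1 : Mβf (S₁ G₁) = S₁ (Mf G₁) := by
    have := part1 m₁ S₁ hS₁
    exact DFunLike.congr_fun this G₁
  have e2 : Mβf (S₂ G₂) = S₂ (Mf G₂) := by
    have := part1 m₂ S₂ hS₂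
    exact DFunLike.congr_fun this G₂
  simp only [ContinuousLinearMap.add_apply, ContinuousLinearMap.comp_apply, hA1, hA2]
  rw [hη, map_add, e1, e2]
end

section
/- Let φ ∈ L²(ℝ) be measurable with ∑_{k ∈ ℤ} |φ(x + k)|² = 1 for almost every x ∈ ℝ, and for n ∈ ℕ let R_n : L²(𝕋, μ) → L²(ℝ) be the isometry (R_n ξ)(x) = 2^{−n/2} ξ(e^{2πi·2^{−n} x}) φ(2^{−n} x). Let D be the dilation unitary on L²(ℝ), (Dξ)(x) = √2·ξ(2x). Then: (1) D ∘ R_{n+1} = R_n for every n ∈ ℕ; and (2) for every continuous f : 𝕋 → ℂ, R₀ ∘ M_f = M_g ∘ R₀, where M_f is multiplication by f on L²(𝕋, μ), and M_g is multiplication on L²(ℝ) by the function g(x) = f(e^{2πix}). -/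
open MeasureTheory

section Aux

noncomputable def expMap (t : ℝ) : ℂ := Complex.exp (2 * Real.pi * Complex.I * t)

lemma expMap_measurable : Measurable expMap :=
  (Complex.continuous_exp.comp (continuous_const.mul Complex.continuous_ofReal)).measurable

lemma expMap_add_int (x : ℝ) (k : ℤ) : expMap (x + k) = expMap x := by
  unfold expMap
  push_cast
  rw [show 2 * (Real.pi : ℂ) * Complex.I * (x + k)
      = 2 * (Real.pi : ℂ) * Complex.I * x + k * (2 * Real.pi * Complex.I) by ring,
    Complex.exp_add, Complex.exp_int_mul_two_pi_mul_I, mul_one]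

lemma expMap_qmp : Measure.QuasiMeasurePreserving expMap volume haarCircle := by
  refine ⟨expMap_measurable, Measure.AbsolutelyContinuous.mk fun s hs h0 => ?_⟩
  rw [Measure.map_apply expMap_measurable hs]
  have h1 : volume (expMap ⁻¹' s ∩ Set.Ioc (0 : ℝ) 1) = 0 := by
    rw [haarCircle] at h0
    rw [show (fun t : ℝ => Complex.exp (2 * Real.pi * Complex.I * t)) = expMap from rfl,
      Measure.map_apply expMap_measurable hs,
      Measure.restrict_apply (expMap_measurable hs)] at h0
    exact h0
  have hcover : expMap ⁻¹' s ⊆ ⋃ k : ℤ, (expMap ⁻¹' s ∩ Set.Ioc ((k : ℝ)) (k + 1)) := by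
    intro x hx
    have : x ∈ ⋃ k : ℤ, Set.Ioc ((0 : ℝ) + k) ((0 : ℝ) + k + 1) := by
      rw [iUnion_Ioc_add_intCast]; trivial
    rcases Set.mem_iUnion.1 this with ⟨k, hk⟩
    exact Set.mem_iUnion.2 ⟨k, hx, by simpa using hk⟩
  refine measure_mono_null hcover (measure_iUnion_null fun k => ?_)
  have hset : expMap ⁻¹' s ∩ Set.Ioc ((k : ℝ)) (k + 1)
      = (fun x : ℝ => x + (-k : ℝ)) ⁻¹' (expMap ⁻¹' s ∩ Set.Ioc (0 : ℝ) 1) := by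
    ext x
    simp only [Set.mem_inter_iff, Set.mem_preimage, Set.mem_Ioc]
    constructor
    · rintro ⟨hxs, h1, h2⟩
      refine ⟨?_, by linarith, by linarith⟩
      have h := expMap_add_int (x + (-k : ℝ)) k
      simp only [neg_add_cancel_right] at h
      rw [← h]; exact hxs
    · rintro ⟨hxs, h1, h2⟩
      refine ⟨?_, by linarith, by linarith⟩
      have h := expMap_add_int (x + (-k : ℝ)) k
      simp only [neg_add_cancel_right] at h
      rw [h]; exact hxs
  rw [hset, measure_preimage_add_right]
  exact h1

lemma mul2_qmp : Measure.QuasiMeasurePreserving (fun x : ℝ => 2 * x) volume volume := by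
  refine ⟨measurable_const_mul 2, ?_⟩
  rw [Real.map_volume_mul_left (by norm_num : (2:ℝ) ≠ 0)]
  refine Measure.AbsolutelyContinuous.mk fun s hs h => ?_
  simp [Measure.smul_apply, h]

end Aux

/-- With `φ ∈ L²(ℝ)` satisfying `∑_{k∈ℤ}|φ(x+k)|² = 1` a.e., the isometries
`(R_n ξ)(x) = 2^{−n/2} ξ(e^{2πi 2^{−n} x}) φ(2^{−n} x)` and the dilation unitary
`(Dξ)(x) = √2 ξ(2x)` satisfy: (1) `D ∘ R_{n+1} = R_n`; and (2) for continuous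
`f : 𝕋 → ℂ`, `R₀ ∘ M_f = M_g ∘ R₀` where `g(x) = f(e^{2πix})`. -/
theorem stmt14 (φ : ℝ → ℂ) (hφmeas : Measurable φ)
    (hφ2 : MemLp φ 2 (volume : Measure ℝ))
    (hφsum : ∀ᵐ x : ℝ ∂volume, ∑' k : ℤ, ‖φ (x + k)‖ ^ 2 = 1)
    (R : ℕ → (Lp ℂ 2 haarCircle →ₗ[ℂ] Lp ℂ 2 (volume : Measure ℝ)))
    (hR : ∀ (n : ℕ) (ξ : Lp ℂ 2 haarCircle),
      ⇑(R n ξ) =ᵐ[volume] fun x : ℝ =>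
        (((2 : ℝ) ^ (-(n : ℝ) / 2) : ℝ) : ℂ) *
          ξ (Complex.exp (2 * Real.pi * Complex.I * ((x / 2 ^ n : ℝ) : ℂ))) *
          φ (x / 2 ^ n))
    (D : Lp ℂ 2 (volume : Measure ℝ) →ₗ[ℂ] Lp ℂ 2 (volume : Measure ℝ))
    (hD : ∀ ξ : Lp ℂ 2 (volume : Measure ℝ),
      ⇑(D ξ) =ᵐ[volume] fun x : ℝ => (Real.sqrt 2 : ℂ) * ξ (2 * x)) :
    (∀ n : ℕ, D.comp (R (n + 1)) = R n) ∧
    (∀ f : ℂ → ℂ, ContinuousOn f (Metric.sphere (0 : ℂ) 1) →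
      ∀ Mf : Lp ℂ 2 haarCircle →ₗ[ℂ] Lp ℂ 2 haarCircle,
        (∀ ξ : Lp ℂ 2 haarCircle, ⇑(Mf ξ) =ᵐ[haarCircle] fun z => f z * ξ z) →
      ∀ Mg : Lp ℂ 2 (volume : Measure ℝ) →ₗ[ℂ] Lp ℂ 2 (volume : Measure ℝ),
        (∀ ξ : Lp ℂ 2 (volume : Measure ℝ),
          ⇑(Mg ξ) =ᵐ[volume] fun x : ℝ =>
            f (Complex.exp (2 * Real.pi * Complex.I * (x : ℂ))) * ξ x) →
      (R 0).comp Mf = Mg.comp (R 0)) := by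
  constructor
  · intro n
    apply LinearMap.ext
    intro ξ
    apply Lp.ext (μ := (volume : Measure ℝ))
    have h1 := hD (R (n + 1) ξ)
    have h2 := mul2_qmp.ae_eq_comp (hR (n + 1) ξ)
    have h3 := hR n ξ
    simp only [LinearMap.comp_apply]
    refine h1.trans ((Filter.EventuallyEq.trans ?_ h3.symm))
    filter_upwards [h2] with x hx
    rw [Function.comp_apply] at hx
    rw [hx]
    simp only [Function.comp_apply]
    have harg : (2 * x) / 2 ^ (n + 1) = x / 2 ^ n := by
      rw [pow_succ]
      field_simp
    rw [show ((2 * x) / 2 ^ (n + 1) : ℝ) = x / 2 ^ n from harg]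
    have hc : (Real.sqrt 2 : ℂ) * (((2 : ℝ) ^ (-((n:ℕ)+1 : ℝ) / 2) : ℝ) : ℂ)
        = (((2 : ℝ) ^ (-(n : ℝ) / 2) : ℝ) : ℂ) := by
      rw [← Complex.ofReal_mul]
      congr 1
      rw [Real.sqrt_eq_rpow, ← Real.rpow_add (by norm_num : (0:ℝ) < 2)]
      congr 1
      ring
    push_cast at hc ⊢
    rw [← mul_assoc, ← mul_assoc, hc]
  · intro f _hf Mf hMf Mg hMg
    apply LinearMap.ext
    intro ξ
    apply Lp.ext (μ := (volume : Measure ℝ))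
    simp only [LinearMap.comp_apply]
    have hL := hR 0 (Mf ξ)
    have hRξ := hR 0 ξ
    have hpull := expMap_qmp.ae_eq_comp (hMf ξ)
    have hRRight := hMg ((R 0) ξ)
    refine hL.trans (Filter.EventuallyEq.trans ?_ hRRight.symm)
    filter_upwards [hpull, hRξ] with x hx hx2
    simp only [Function.comp_apply] at hx
    simp only [pow_zero, div_one, Nat.cast_zero, neg_zero, zero_div, Real.rpow_zero,
      Complex.ofReal_one, one_mul] at *
    rw [show Complex.exp (2 * Real.pi * Complex.I * (x : ℂ)) = expMap x from rfl] at *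
    rw [hx, hx2]
    ring
end

section
/- Let g ∈ L²(ℝ). Then the family of modulations {g_k}_{k∈ℤ}, where g_k(x) = e^{2πikx} g(x), is orthonormal in L²(ℝ) if and only if ∑_{k ∈ ℤ} |g(x + k)|² = 1 for almost every x ∈ ℝ. -/
open MeasureTheory ComplexConjugate Set Function
open scoped NNReal ENNReal Real

noncomputable section

namespace Stmt18

/-- The density `|g|²` as an `ℝ≥0∞`-valued function. -/
def Fd (g : ℝ → ℂ) (x : ℝ) : ℝ≥0∞ := ((‖g x‖₊ ^ 2 : ℝ≥0) : ℝ≥0∞)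

/-- The periodization `G(x) = ∑ₖ |g(x+k)|²`. -/
def G (g : ℝ → ℂ) (x : ℝ) : ℝ≥0∞ := ∑' k : ℤ, Fd g (x + k)

lemma G_periodic (g : ℝ → ℂ) : Periodic (G g) 1 := by
  intro x
  rw [G, G, ← (Equiv.addLeft (1 : ℤ)).tsum_eq (fun k : ℤ => Fd g (x + k))]
  refine tsum_congr fun k => ?_
  simp only [Equiv.coe_addLeft]
  congr 1
  push_cast
  ring

lemma Fd_measurable {g : ℝ → ℂ} (hg : Measurable g) : Measurable (Fd g) := by
  unfold Fd
  exact (hg.nnnorm.pow_const 2).coe_nnreal_ennreal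

lemma G_measurable {g : ℝ → ℂ} (hg : Measurable g) : Measurable (G g) :=
  Measurable.ennreal_tsum fun k => (Fd_measurable hg).comp (measurable_add_const (k : ℝ))

lemma Gq_measurable {g : ℝ → ℂ} (hg : Measurable g) :
    Measurable ((G_periodic g).lift : AddCircle (1:ℝ) → ℝ≥0∞) := by
  rw [QuotientAddGroup.measurable_from_quotient]
  have : ((G_periodic g).lift ∘ ((↑) : ℝ → AddCircle (1:ℝ))) = G g :=
    funext fun x => (G_periodic g).lift_coe x
  rw [this]
  exact G_measurable hg

lemma lintegral_Fd_lt_top {g : ℝ → ℂ} (hg2 : MemLp g 2 (volume : Measure ℝ)) :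
    ∫⁻ x, Fd g x ∂(volume : Measure ℝ) < ⊤ := by
  have h := (eLpNorm_lt_top_iff_lintegral_rpow_enorm_lt_top (p := 2) (f := g)
    (by norm_num) (by norm_num)).mp hg2.2
  have : ∀ x : ℝ, Fd g x = (‖g x‖₊ : ℝ≥0∞) ^ (2 : ℝ≥0∞).toReal := by
    intro x
    rw [Fd, ENNReal.coe_pow, show ((2:ℝ≥0∞).toReal) = ((2:ℕ):ℝ) by simp,
      ENNReal.rpow_natCast]
  rw [lintegral_congr this]; exact h


def mu (g : ℝ → ℂ) : Measure (AddCircle (1:ℝ)) :=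
  ((volume : Measure ℝ).withDensity (Fd g)).map ((↑) : ℝ → AddCircle (1:ℝ))

def eZ : ℤ ≃ AddSubgroup.zmultiples (1:ℝ) :=
  Equiv.ofBijective (fun n => ⟨n • (1:ℝ), AddSubgroup.zsmul_mem_zmultiples _ n⟩)
    ⟨fun a b h => by
      have := Subtype.ext_iff.mp h
      simpa using this,
     fun x => by
      obtain ⟨k, hk⟩ := AddSubgroup.mem_zmultiples_iff.mp x.2
      exact ⟨k, Subtype.ext hk⟩⟩

lemma eZ_coe (k : ℤ) : ((eZ k : AddSubgroup.zmultiples (1:ℝ)) : ℝ) = k := by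
  simp [eZ]

lemma tsum_indicator (g : ℝ → ℂ) {s : Set (AddCircle (1:ℝ))} (x : ℝ) :
    ∑' γ : AddSubgroup.zmultiples (1:ℝ),
      (((↑) : ℝ → AddCircle (1:ℝ)) ⁻¹' s).indicator (Fd g) (γ +ᵥ x)
    = (((↑) : ℝ → AddCircle (1:ℝ)) ⁻¹' s).indicator (G g) x := by
  have hmem : ∀ γ : AddSubgroup.zmultiples (1:ℝ),
      ((↑(γ +ᵥ x) : AddCircle (1:ℝ))) = (x : AddCircle (1:ℝ)) := by
    intro γ
    have : (γ +ᵥ x : ℝ) = ↑γ + x := rfl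
    rw [this, QuotientAddGroup.eq_iff_sub_mem]
    simpa using γ.2
  by_cases hx : x ∈ (((↑) : ℝ → AddCircle (1:ℝ)) ⁻¹' s)
  · rw [indicator_of_mem hx]
    have : ∀ γ : AddSubgroup.zmultiples (1:ℝ),
        (((↑) : ℝ → AddCircle (1:ℝ)) ⁻¹' s).indicator (Fd g) (γ +ᵥ x) = Fd g (↑γ + x) := by
      intro γ
      exact indicator_of_mem (by simpa [mem_preimage, hmem γ] using hx) _
    rw [tsum_congr this, ← eZ.tsum_eq (fun γ : AddSubgroup.zmultiples (1:ℝ) => Fd g (↑γ + x))]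
    rw [G]
    exact tsum_congr fun k => by rw [eZ_coe, add_comm]
  · rw [indicator_of_notMem hx]
    rw [tsum_congr (fun γ : AddSubgroup.zmultiples (1:ℝ) =>
      indicator_of_notMem (show (γ +ᵥ x) ∉ _ by simpa [mem_preimage, hmem γ] using hx) (Fd g)),
      tsum_zero]

lemma mu_eq {g : ℝ → ℂ} (hg : Measurable g) :
    mu g = (volume : Measure (AddCircle (1:ℝ))).withDensity ((G_periodic g).lift) := by
  haveI : Fact ((0:ℝ) < 1) := ⟨one_pos⟩
  ext s hs
  have hmk : Measurable ((↑) : ℝ → AddCircle (1:ℝ)) := AddCircle.measurable_mk'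
  rw [mu, Measure.map_apply hmk hs, withDensity_apply _ (hmk hs), withDensity_apply _ hs]
  have hGq := Gq_measurable hg
  have hvol : (volume : Measure (AddCircle (1:ℝ))) =
      Measure.map ((↑) : ℝ → AddCircle (1:ℝ)) (volume.restrict (Ioc 0 (0+1))) :=
    (AddCircle.measurePreserving_mk 1 0).map_eq.symm
  rw [← lintegral_indicator hs _, hvol, lintegral_map (hGq.indicator hs) hmk]
  have hind : ∀ x : ℝ, s.indicator ((G_periodic g).lift) ((x : AddCircle (1:ℝ)))
      = (((↑) : ℝ → AddCircle (1:ℝ)) ⁻¹' s).indicator (G g) x := by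
    intro x
    by_cases hx : (x : AddCircle (1:ℝ)) ∈ s
    · rw [indicator_of_mem hx, indicator_of_mem (show x ∈ _ ⁻¹' s from hx)]
      exact Periodic.lift_coe _ _
    · rw [indicator_of_notMem hx, indicator_of_notMem (show x ∉ _ ⁻¹' s from hx)]
  simp_rw [hind]
  rw [← lintegral_indicator (hmk hs) _]
  have fd := isAddFundamentalDomain_Ioc one_pos 0 (volume : Measure ℝ)
  rw [fd.lintegral_eq_tsum'' ((((↑) : ℝ → AddCircle (1:ℝ)) ⁻¹' s).indicator (Fd g))]
  rw [← lintegral_tsum (f := fun (γ : AddSubgroup.zmultiples (1:ℝ)) (x : ℝ) =>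
      (((↑) : ℝ → AddCircle (1:ℝ)) ⁻¹' s).indicator (Fd g) (γ +ᵥ x)) fun γ =>
    (((Fd_measurable hg).indicator (hmk hs)).comp (measurable_const_add (γ : ℝ))).aemeasurable]
  exact lintegral_congr fun x => tsum_indicator g x


lemma isFiniteMeasure_mu {g : ℝ → ℂ} (hg : Measurable g)
    (hg2 : MemLp g 2 (volume : Measure ℝ)) : IsFiniteMeasure (mu g) := by
  constructor
  rw [mu, Measure.map_apply AddCircle.measurable_mk' MeasurableSet.univ,
    withDensity_apply _ (AddCircle.measurable_mk' MeasurableSet.univ)]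
  exact lt_of_le_of_lt (lintegral_mono_set (subset_univ _))
    (by rw [Measure.restrict_univ]; exact lintegral_Fd_lt_top hg2)

lemma G_ae_one_of_restrict {g : ℝ → ℂ} (hg : Measurable g)
    (h : ∀ᵐ x ∂(volume.restrict (Ioc (0:ℝ) (0+1))), G g x = 1) :
    ∀ᵐ x : ℝ ∂volume, G g x = 1 := by
  have hbadmeas : MeasurableSet {x : ℝ | ¬ G g x = 1} :=
    ((G_measurable hg) (measurableSet_singleton 1)).compl
  have h0 : volume ({x : ℝ | ¬ G g x = 1} ∩ Ioc 0 (0+1)) = 0 := by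
    have := ae_iff.mp h
    rwa [Measure.restrict_apply hbadmeas] at this
  rw [ae_iff]
  have hcover : {x : ℝ | ¬ G g x = 1} = ⋃ k : ℤ, ({x : ℝ | ¬ G g x = 1} ∩ Ioc (k:ℝ) (k+1)) := by
    rw [← inter_iUnion, iUnion_Ioc_intCast, inter_univ]
  rw [hcover]
  refine measure_iUnion_null fun k => ?_
  have hsub : ({x : ℝ | ¬ G g x = 1} ∩ Ioc (k:ℝ) (k+1)) ⊆
      (fun y : ℝ => y + (-k:ℝ)) ⁻¹' ({x : ℝ | ¬ G g x = 1} ∩ Ioc 0 (0+1)) := by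
    rintro x ⟨hx1, hx2⟩
    refine ⟨?_, ?_⟩
    · have hper : G g (x + (-k:ℝ)) = G g x := by
        have := (G_periodic g).sub_zsmul_eq k (x := x)
        simpa [sub_eq_add_neg] using this
      simpa [mem_setOf_eq, hper] using hx1
    · show x + (-k:ℝ) ∈ Ioc (0:ℝ) (0+1)
      simp only [mem_Ioc] at hx2 ⊢
      constructor
      · linarith [hx2.1]
      · linarith [hx2.2]
  refine measure_mono_null hsub ?_
  rw [measure_preimage_add_right]
  exact h0

lemma mu_eq_volume_iff {g : ℝ → ℂ} (hg : Measurable g) :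
    mu g = (volume : Measure (AddCircle (1:ℝ))) ↔ ∀ᵐ x : ℝ ∂volume, G g x = 1 := by
  haveI : Fact ((0:ℝ) < 1) := ⟨one_pos⟩
  rw [mu_eq hg]
  have h1 : (volume : Measure (AddCircle (1:ℝ))).withDensity (fun _ => (1:ℝ≥0∞)) = volume := by
    simpa using (withDensity_one (μ := (volume : Measure (AddCircle (1:ℝ)))))
  nth_rewrite 2 [← h1]
  rw [withDensity_eq_iff_of_sigmaFinite (Gq_measurable hg).aemeasurable aemeasurable_const]
  have heq : ((G_periodic g).lift =ᵐ[(volume : Measure (AddCircle (1:ℝ)))] fun _ => (1:ℝ≥0∞)) ↔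
      (∀ᵐ y ∂(volume : Measure (AddCircle (1:ℝ))), (G_periodic g).lift y = 1) := Iff.rfl
  rw [heq]
  have hvol : (volume : Measure (AddCircle (1:ℝ))) =
      Measure.map ((↑) : ℝ → AddCircle (1:ℝ)) (volume.restrict (Ioc 0 (0+1))) :=
    (AddCircle.measurePreserving_mk 1 0).map_eq.symm
  have hms : MeasurableSet {y : AddCircle (1:ℝ) | (G_periodic g).lift y = (1 : ℝ≥0∞)} :=
    (Gq_measurable hg) (measurableSet_singleton 1)
  constructor
  · intro h
    refine G_ae_one_of_restrict hg ?_
    have := (ae_map_iff AddCircle.measurable_mk'.aemeasurable hms).mp (by rw [← hvol]; exact h)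
    refine this.mono fun x hx => ?_
    rwa [Periodic.lift_coe] at hx
  · intro h
    have hres : ∀ᵐ x ∂(volume.restrict (Ioc (0:ℝ) (0+1))), G g x = 1 := ae_restrict_of_ae h
    rw [hvol, ae_map_iff AddCircle.measurable_mk'.aemeasurable hms]
    refine hres.mono fun x hx => ?_
    show (G_periodic g).lift ↑x = 1
    rwa [Periodic.lift_coe]

lemma G_eq_one_iff (g : ℝ → ℂ) (x : ℝ) :
    G g x = 1 ↔ ∑' k : ℤ, ‖g (x + k)‖ ^ 2 = 1 := by
  set f : ℤ → ℝ≥0 := fun k => ‖g (x + k)‖₊ ^ 2 with hf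
  have hG : G g x = ∑' k, (f k : ℝ≥0∞) := rfl
  have hreal : ∀ k : ℤ, ‖g (x + k)‖ ^ 2 = ((f k : ℝ)) := by
    intro k
    simp [hf, ← coe_nnnorm]
  simp_rw [hreal]
  rw [hG]
  constructor
  · intro h
    have hsum : Summable f := by
      rw [← ENNReal.tsum_coe_ne_top_iff_summable]
      simp [h]
    have : ((∑' k, f k : ℝ≥0) : ℝ≥0∞) = 1 := by rw [ENNReal.coe_tsum hsum, h]
    have h1 : (∑' k, f k : ℝ≥0) = 1 := by exact_mod_cast this
    rw [← NNReal.coe_tsum]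
    exact_mod_cast h1
  · intro h
    have hsum' : Summable (fun k => (f k : ℝ)) := by
      by_contra hc
      rw [tsum_eq_zero_of_not_summable hc] at h
      norm_num at h
    have hsum : Summable f := NNReal.summable_coe.mp hsum'
    have h1 : (∑' k, f k : ℝ≥0) = 1 := by
      have := NNReal.coe_tsum (f := f) (L := SummationFilter.unconditional ℤ)
      apply NNReal.coe_injective
      rw [this, h, NNReal.coe_one]
    rw [← ENNReal.coe_tsum hsum, h1, ENNReal.coe_one]


lemma integral_fourier_mu {g : ℝ → ℂ} (hg : Measurable g) (n : ℤ) :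
    ∫ y, fourier n y ∂(mu g) =
      ∫ x : ℝ, Complex.exp (2 * Real.pi * Complex.I * (n:ℂ) * (x:ℂ)) * (conj (g x) * g x) := by
  haveI : Fact ((0:ℝ) < 1) := ⟨one_pos⟩
  rw [mu, integral_map AddCircle.measurable_mk'.aemeasurable
    (ContinuousMap.continuous (fourier n)).aestronglyMeasurable]
  rw [show (volume : Measure ℝ).withDensity (Fd g) =
    (volume : Measure ℝ).withDensity (fun x => ((fun y => ‖g y‖₊ ^ 2) x : ℝ≥0∞)) from rfl]
  rw [integral_withDensity_eq_integral_smul (hg.nnnorm.pow_const 2)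
    (fun x : ℝ => fourier n (x : AddCircle (1:ℝ)))]
  refine integral_congr_ae (Filter.Eventually.of_forall fun x => ?_)
  show (‖g x‖₊ ^ 2 : ℝ≥0) • fourier n (x : AddCircle (1:ℝ)) =
    Complex.exp (2 * Real.pi * Complex.I * (n:ℂ) * (x:ℂ)) * (conj (g x) * g x)
  rw [fourier_coe_apply]
  rw [NNReal.smul_def, Complex.real_smul]
  have h1 : conj (g x) * g x = (((‖g x‖₊ ^ 2 : ℝ≥0) : ℝ) : ℂ) := by
    rw [Complex.conj_mul']
    push_cast
    norm_cast
  rw [h1]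
  push_cast
  ring

lemma integral_fourier_volume (n : ℤ) :
    ∫ y, fourier n y ∂(volume : Measure (AddCircle (1:ℝ))) = if n = 0 then (1:ℂ) else 0 := by
  haveI : Fact ((0:ℝ) < 1) := ⟨one_pos⟩
  rw [← AddCircle.intervalIntegral_preimage 1 0 (fourier n)]
  by_cases hn : n = 0
  · subst hn
    simp
  · rw [if_neg hn]
    have hc : (2 * Real.pi * Complex.I * (n:ℂ)) ≠ 0 := by
      simp [Real.pi_ne_zero, Complex.I_ne_zero, hn]
    have : ∀ x : ℝ, fourier n (x : AddCircle (1:ℝ)) =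
        Complex.exp ((2 * Real.pi * Complex.I * (n:ℂ)) * (x:ℂ)) := by
      intro x
      rw [fourier_coe_apply]
      push_cast
      ring_nf
    rw [intervalIntegral.integral_congr (fun x _ => this x)]
    rw [integral_exp_mul_complex hc]
    have he : Complex.exp ((2 * Real.pi * Complex.I * (n:ℂ)) * ((0:ℝ):ℂ)) = 1 := by
      simp
    have he1 : Complex.exp ((2 * Real.pi * Complex.I * (n:ℂ)) * (((0:ℝ)+1:ℝ):ℂ)) = 1 := by
      have harg : (2 * Real.pi * Complex.I * (n:ℂ)) * (((0:ℝ)+1:ℝ):ℂ) = (n:ℂ) * (2 * Real.pi * Complex.I) := by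
        push_cast
        ring
      rw [harg, Complex.exp_int_mul_two_pi_mul_I n]
    rw [he, he1]
    simp


lemma integrable_cm {m : Measure (AddCircle (1:ℝ))} [IsFiniteMeasure m]
    [Fact ((0:ℝ) < 1)] (f : C(AddCircle (1:ℝ), ℂ)) : Integrable f m :=
  f.continuous.integrable_of_hasCompactSupport
    (IsCompact.of_isClosed_subset isCompact_univ (isClosed_tsupport f) (subset_univ _))

lemma continuous_integral_cm (m : Measure (AddCircle (1:ℝ))) [IsFiniteMeasure m]
    [Fact ((0:ℝ) < 1)] :
    Continuous (fun f : C(AddCircle (1:ℝ), ℂ) => ∫ y, f y ∂m) := by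
  refine (LipschitzWith.of_dist_le_mul (K := (m univ).toNNReal) fun f h => ?_).continuous
  rw [dist_eq_norm, ← integral_sub (integrable_cm f) (integrable_cm h)]
  calc ‖∫ y, (f y - h y) ∂m‖ ≤ dist f h * (m univ).toReal := by
        refine norm_integral_le_of_norm_le_const
          (Filter.Eventually.of_forall fun y => ?_)
        rw [← dist_eq_norm]
        exact ContinuousMap.dist_apply_le_dist y
    _ = ↑(m univ).toNNReal * dist f h := by
        rw [mul_comm]
        rfl

lemma measure_eq_of_fourier {μ ν : Measure (AddCircle (1:ℝ))} [IsFiniteMeasure μ]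
    [IsFiniteMeasure ν]
    (h : ∀ n : ℤ, ∫ y, fourier n y ∂μ = ∫ y, fourier n y ∂ν) : μ = ν := by
  haveI : Fact ((0:ℝ) < 1) := ⟨one_pos⟩
  set S : Submodule ℂ C(AddCircle (1:ℝ), ℂ) :=
    { carrier := {f | ∫ y, f y ∂μ = ∫ y, f y ∂ν}
      add_mem' := by
        intro f h₁ hf hh
        simp only [mem_setOf_eq, ContinuousMap.coe_add, Pi.add_apply] at *
        rw [integral_add (integrable_cm f) (integrable_cm h₁),
          integral_add (integrable_cm f) (integrable_cm h₁), hf, hh]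
      zero_mem' := by simp
      smul_mem' := by
        intro c f hf
        simp only [mem_setOf_eq, ContinuousMap.coe_smul, Pi.smul_apply] at *
        rw [integral_smul, integral_smul, hf] } with hS
  have hclosed : IsClosed (S : Set C(AddCircle (1:ℝ), ℂ)) :=
    isClosed_eq (continuous_integral_cm μ) (continuous_integral_cm ν)
  have hspan : Submodule.span ℂ (Set.range (@fourier 1)) ≤ S := by
    rw [Submodule.span_le]
    rintro _ ⟨n, rfl⟩
    exact h n
  have htop : (⊤ : Submodule ℂ C(AddCircle (1:ℝ), ℂ)) ≤ S := by
    rw [← span_fourier_closure_eq_top]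
    exact Submodule.topologicalClosure_minimal _ hspan hclosed
  have key : ∀ f : C(AddCircle (1:ℝ), ℂ), ∫ y, f y ∂μ = ∫ y, f y ∂ν :=
    fun f => htop Submodule.mem_top
  refine ext_of_forall_lintegral_eq_of_IsFiniteMeasure fun f => ?_
  have hcR : Continuous fun y : AddCircle (1:ℝ) => ((f y : ℝ)) :=
    NNReal.continuous_coe.comp f.continuous
  have hcC : Continuous fun y : AddCircle (1:ℝ) => (((f y : ℝ)) : ℂ) :=
    Complex.continuous_ofReal.comp hcR
  have hreal : ∫ y, ((f y : ℝ)) ∂μ = ∫ y, ((f y : ℝ)) ∂ν := by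
    have hk := key ⟨fun y => (((f y : ℝ)) : ℂ), hcC⟩
    simp only [ContinuousMap.coe_mk] at hk
    have e1 : ∫ y, (((f y : ℝ)) : ℂ) ∂μ = ((∫ y, ((f y : ℝ)) ∂μ : ℝ) : ℂ) :=
      integral_ofReal
    have e2 : ∫ y, (((f y : ℝ)) : ℂ) ∂ν = ((∫ y, ((f y : ℝ)) ∂ν : ℝ) : ℂ) :=
      integral_ofReal
    rw [e1, e2] at hk
    exact_mod_cast hk
  have hintR : ∀ (m : Measure (AddCircle (1:ℝ))) [IsFiniteMeasure m],
      Integrable (fun y => ((f y : ℝ))) m := by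
    intro m _
    exact hcR.integrable_of_hasCompactSupport
      (IsCompact.of_isClosed_subset isCompact_univ (isClosed_tsupport _) (subset_univ _))
  rw [lintegral_coe_eq_integral _ (hintR μ), lintegral_coe_eq_integral _ (hintR ν), hreal]



lemma integrand_eq (g : ℝ → ℂ) (k l : ℤ) (x : ℝ) :
    conj (Complex.exp (2 * Real.pi * Complex.I * (k : ℂ) * (x : ℂ)) * g x) *
      (Complex.exp (2 * Real.pi * Complex.I * (l : ℂ) * (x : ℂ)) * g x)
    = Complex.exp (2 * Real.pi * Complex.I * (((l - k : ℤ)) : ℂ) * (x : ℂ)) *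
        (conj (g x) * g x) := by
  rw [map_mul, ← Complex.exp_conj]
  have hconj : conj (2 * (Real.pi : ℂ) * Complex.I * (k : ℂ) * (x : ℂ)) =
      -(2 * (Real.pi : ℂ) * Complex.I * (k : ℂ) * (x : ℂ)) := by
    simp only [map_mul, Complex.conj_I, Complex.conj_ofReal, map_ofNat, map_intCast]
    ring
  rw [hconj]
  have hsplit : Complex.exp (2 * Real.pi * Complex.I * (((l - k : ℤ)) : ℂ) * (x : ℂ)) =
      Complex.exp (-(2 * (Real.pi : ℂ) * Complex.I * (k : ℂ) * (x : ℂ))) *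
        Complex.exp (2 * Real.pi * Complex.I * (l : ℂ) * (x : ℂ)) := by
    rw [← Complex.exp_add]
    congr 1
    push_cast
    ring
  rw [hsplit]
  ring

end Stmt18

open Stmt18

/-- For `g ∈ L²(ℝ)`, the modulations `g_k(x) = e^{2πikx} g(x)` form an orthonormal
family in `L²(ℝ)` if and only if `∑_{k∈ℤ} |g(x+k)|² = 1` for almost every `x`. -/
theorem stmt18 (g : ℝ → ℂ) (hgmeas : Measurable g)
    (hg2 : MemLp g 2 (volume : Measure ℝ)) :
    (∀ k l : ℤ,
      (∫ x : ℝ, conj (Complex.exp (2 * Real.pi * Complex.I * (k : ℂ) * (x : ℂ)) * g x) *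
          (Complex.exp (2 * Real.pi * Complex.I * (l : ℂ) * (x : ℂ)) * g x) ∂volume) =
        if k = l then 1 else 0) ↔
    (∀ᵐ x : ℝ ∂volume, ∑' k : ℤ, ‖g (x + k)‖ ^ 2 = 1) := by
  haveI : Fact ((0:ℝ) < 1) := ⟨one_pos⟩
  haveI := isFiniteMeasure_mu hgmeas hg2
  have hI := integral_fourier_mu hgmeas
  constructor
  · intro hA
    have hfor : ∀ n : ℤ, ∫ y, fourier n y ∂(mu g) =
        ∫ y, fourier n y ∂(volume : Measure (AddCircle (1:ℝ))) := by
      intro n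
      rw [hI n, integral_fourier_volume]
      have h0 := hA 0 n
      rw [integral_congr_ae (Filter.Eventually.of_forall fun x => integrand_eq g 0 n x)] at h0
      simp only [sub_zero] at h0
      rw [h0]
      simp [eq_comm]
    have hmuv : mu g = volume := measure_eq_of_fourier hfor
    exact ((mu_eq_volume_iff hgmeas).mp hmuv).mono fun x hx => (G_eq_one_iff g x).mp hx
  · intro hB
    have hae : ∀ᵐ x : ℝ ∂volume, G g x = 1 :=
      hB.mono fun x hx => (G_eq_one_iff g x).mpr hx
    have hmuv : mu g = volume := (mu_eq_volume_iff hgmeas).mpr hae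
    intro k l
    rw [integral_congr_ae (Filter.Eventually.of_forall fun x => integrand_eq g k l x)]
    have hIn := hI (l - k)
    rw [hmuv, integral_fourier_volume] at hIn
    rw [← hIn]
    simp only [sub_eq_zero]
    by_cases hkl : k = l
    · simp [hkl]
    · rw [if_neg hkl, if_neg (fun hc => hkl hc.symm)]
end
end
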